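/- arXiv:0706.1226 — 5 statements merged into one kernel-verified Lean document; each statement's English description precedes it below -/
import Mathlib

section
/- Suppose c satisfies (A0), (A1), (A2), and let x_m ∈ Ω and y₀, y₁ ∈ Λ be joined by a c-segment [y₀,y₁]_{x_m} lying in Λ. If Monotonicity holds (S⁺_{θ₁} ⊆ S⁺_{θ₂} whenever 0 ≤ θ₁ ≤ θ₂ ≤ 1), then DASM holds: f_θ(x) ≤ max(f₀(x), f₁(x)) for all θ ∈ (0,1) and all x ∈ Ω. -/
open scoped RealInnerProductSpace
open Filter Topology Set

noncomputable section

variable {n : ℕ}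

local notation "E" => EuclideanSpace ℝ (Fin n)

/-- `-∇ₓ c(x,y)`, the negative gradient of `x' ↦ c(x',y)` at `x`. -/
def negGradX (c : E → E → ℝ) (x y : E) : E :=
  -(gradient (fun x' => c x' y) x)

/-- `-∇_y c(x,y)`, the negative gradient of `y' ↦ c(x,y')` at `y`. -/
def negGradY (c : E → E → ℝ) (x y : E) : E :=
  -(gradient (fun y' => c x y') y)

/-- The swapped cost `c*(y,x) = c(x,y)`. -/
def cStar (c : E → E → ℝ) : E → E → ℝ := fun y x => c x y

/-- The domain of the `c`-exponential map at `x`: `{-∇ₓ c(x,y) : y ∈ Λ}`. -/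
def cExpDom (c : E → E → ℝ) (Λ : Set E) (x : E) : Set E :=
  (fun y => negGradX c x y) '' Λ

/-- The `c`-exponential map: `cExp c Λ x p` is the point `y ∈ Λ` with `p = -∇ₓ c(x,y)`
(when it exists and is unique). -/
def cExp (c : E → E → ℝ) (Λ : Set E) (x p : E) : E :=
  Function.invFunOn (fun y => negGradX c x y) Λ p

/-- Condition (A0): the cost extends to a `C⁴` function on `cl Ω × cl Λ`. -/
def A0 (c : E → E → ℝ) (Ω Λ : Set E) : Prop :=
  ContDiffOn ℝ 4 (fun q : E × E => c q.1 q.2) (closure Ω ×ˢ closure Λ)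

/-- Condition (A1): injectivity of `y ↦ -∇ₓ c(x,y)` on `cl Λ` and of
`x ↦ -∇_y c(x,y)` on `cl Ω`. -/
def A1 (c : E → E → ℝ) (Ω Λ : Set E) : Prop :=
  (∀ x ∈ Ω, Set.InjOn (fun y => negGradX c x y) (closure Λ)) ∧
  (∀ y ∈ Λ, Set.InjOn (fun x => negGradY c x y) (closure Ω))

/-- Condition (A2): the mixed second derivative `D²ₓᵧ c(x,y)`, as a linear map, is
invertible for all `(x,y) ∈ cl Ω × cl Λ`. -/
def A2 (c : E → E → ℝ) (Ω Λ : Set E) : Prop :=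
  ∀ x ∈ closure Ω, ∀ y ∈ closure Λ,
    Function.Bijective (fderiv ℝ (fun y' => negGradX c x y') y)

/-- The `c`-sectional curvature
`𝔖_c(x,y)(η,ξ) = (d²/dt²)|₀ [-D²ₓₓ c](x, cExpₓ(p + tξ))(η,η)` with `p = -∇ₓ c(x,y)`. -/
def cSectional (c : E → E → ℝ) (Λ : Set E) (x y η ξ : E) : ℝ :=
  deriv (deriv (fun t : ℝ =>
    -(iteratedFDeriv ℝ 2
        (fun x' => c x' (cExp c Λ x (negGradX c x y + t • ξ))) x ![η, η]))) 0

/-- Condition (A3W): nonnegative `c`-sectional curvature in orthogonal directions. -/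
def A3W (c : E → E → ℝ) (Ω Λ : Set E) : Prop :=
  ∀ x ∈ Ω, ∀ y ∈ Λ, ∀ η ξ : E, ⟪η, ξ⟫ = 0 → 0 ≤ cSectional c Λ x y η ξ

/-- Condition (A3S): uniformly positive `c`-sectional curvature in orthogonal directions. -/
def A3S (c : E → E → ℝ) (Ω Λ : Set E) : Prop :=
  ∃ C₀ > (0:ℝ), ∀ x ∈ Ω, ∀ y ∈ Λ, ∀ η ξ : E, ⟪η, ξ⟫ = 0 →
    C₀ * ‖η‖ ^ 2 * ‖ξ‖ ^ 2 ≤ cSectional c Λ x y η ξ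

/-- `Λ` is `c`-convex with respect to `Ω`: `(cExpₓ)⁻¹(Λ)` is convex for every `x ∈ Ω`. -/
def CConvexTarget (c : E → E → ℝ) (Ω Λ : Set E) : Prop :=
  ∀ x ∈ Ω, Convex ℝ (cExpDom c Λ x)

/-- `Ω` is `c*`-convex with respect to `Λ`: `(c*Exp_y)⁻¹(Ω)` is convex for every `y ∈ Λ`. -/
def CStarConvexSource (c : E → E → ℝ) (Ω Λ : Set E) : Prop :=
  ∀ y ∈ Λ, Convex ℝ ((fun x => negGradY c x y) '' Ω)

/-- The `c`-Legendre transform `L^c v(x) = sup_{y ∈ Λ} (-c(x,y) - v(y))`. -/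
def cTransform (c : E → E → ℝ) (Λ : Set E) (v : E → EReal) (x : E) : EReal :=
  ⨆ y ∈ Λ, (((-(c x y) : ℝ) : EReal) - v y)

/-- `φ` is a `c`-convex function on `Ω` indexed by `Λ`. -/
def IsCConvexOn (c : E → E → ℝ) (Ω Λ : Set E) (φ : E → ℝ) : Prop :=
  ∃ v : E → EReal,
    (∀ x ∈ Ω, (φ x : EReal) = cTransform c Λ v x) ∧
    (∀ x ∈ Ω, ∃ y ∈ closure Λ, (φ x : EReal) + v y = ((-(c x y) : ℝ) : EReal))

/-- The `c*`-Legendre transform `L^{c*} φ(y) = sup_{x ∈ Ω} (-c(x,y) - φ(x))`. -/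
def cStarTransform (c : E → E → ℝ) (Ω : Set E) (φ : E → ℝ) (y : E) : EReal :=
  ⨆ x ∈ Ω, (((-(c x y) - φ x : ℝ)) : EReal)

/-- The contact set `G_φ(x) = {y ∈ cl Λ : φ(x) + L^{c*}φ(y) = -c(x,y)}`. -/
def contactSet (c : E → E → ℝ) (Ω Λ : Set E) (φ : E → ℝ) (x : E) : Set E :=
  {y ∈ closure Λ | (φ x : EReal) + cStarTransform c Ω φ y = ((-(c x y) : ℝ) : EReal)}

/-- The (local) subdifferential `∂φ(x)`:
`φ(z) ≥ φ(x) + ⟨p, z - x⟩ + o(‖z - x‖)` as `z → x` in `Ω`. -/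
def subdiff (Ω : Set E) (φ : E → ℝ) (x : E) : Set E :=
  {p : E | ∀ ε > (0:ℝ), ∀ᶠ z in 𝓝[Ω] x,
      φ x + ⟪p, z - x⟫ - ε * ‖z - x‖ ≤ φ z}

/-- The `c`-subdifferential `∂^c φ(x) = {-∇ₓ c(x,y) : y ∈ G_φ(x)}`. -/
def cSubdiff (c : E → E → ℝ) (Ω Λ : Set E) (φ : E → ℝ) (x : E) : Set E :=
  (fun y => negGradX c x y) '' contactSet c Ω Λ φ x

/-- The straight segment `p_θ = (1-θ) p₀ + θ p₁` with `pᵢ = -∇ₓ c(x_m, yᵢ)`. -/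
def pSeg (c : E → E → ℝ) (xm y₀ y₁ : E) (θ : ℝ) : E :=
  (1 - θ) • negGradX c xm y₀ + θ • negGradX c xm y₁

/-- The `c`-segment `y_θ = cExp_{x_m}(p_θ)` joining `y₀` to `y₁` with respect to `x_m`. -/
def ySeg (c : E → E → ℝ) (Λ : Set E) (xm y₀ y₁ : E) (θ : ℝ) : E :=
  cExp c Λ xm (pSeg c xm y₀ y₁ θ)

/-- The sliding mountain `f_θ(x) = -c(x, y_θ) + c(x_m, y_θ)`. -/
def slide (c : E → E → ℝ) (Λ : Set E) (xm y₀ y₁ : E) (θ : ℝ) (x : E) : ℝ :=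
  -(c x (ySeg c Λ xm y₀ y₁ θ)) + c xm (ySeg c Λ xm y₀ y₁ θ)

/-- The `c`-segment `[y₀,y₁]_{x_m}` lies in `Λ`:
each `p_θ`, `θ ∈ [0,1]`, is in the domain of `cExp_{x_m}`. -/
def segInTarget (c : E → E → ℝ) (Λ : Set E) (xm y₀ y₁ : E) : Prop :=
  ∀ θ ∈ Set.Icc (0:ℝ) 1, pSeg c xm y₀ y₁ θ ∈ cExpDom c Λ xm

/-- The level set `S_θ = {x ∈ Ω : (d/dθ) f_θ(x) = 0}`. -/
def Slevel (c : E → E → ℝ) (Ω Λ : Set E) (xm y₀ y₁ : E) (θ : ℝ) : Set E :=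
  {x ∈ Ω | deriv (fun θ' => slide c Λ xm y₀ y₁ θ' x) θ = 0}

/-- The super-level set `S⁺_θ = {x ∈ Ω : (d/dθ) f_θ(x) ≥ 0}`. -/
def Splus (c : E → E → ℝ) (Ω Λ : Set E) (xm y₀ y₁ : E) (θ : ℝ) : Set E :=
  {x ∈ Ω | 0 ≤ deriv (fun θ' => slide c Λ xm y₀ y₁ θ' x) θ}


lemma contDiffAt_uncurryC {c : E → E → ℝ} {Ω Λ : Set E} (hΩ : IsOpen Ω) (hΛ : IsOpen Λ)
    (h0 : A0 c Ω Λ) {x y : E} (hx : x ∈ Ω) (hy : y ∈ Λ) :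
    ContDiffAt ℝ 4 (fun q : E × E => c q.1 q.2) (x, y) :=
  h0.contDiffAt (mem_nhds_iff.2 ⟨Ω ×ˢ Λ, Set.prod_mono subset_closure subset_closure,
    hΩ.prod hΛ, ⟨hx, hy⟩⟩)

lemma contDiffAt_negGradXC {c : E → E → ℝ} {Ω Λ : Set E} (hΩ : IsOpen Ω) (hΛ : IsOpen Λ)
    (h0 : A0 c Ω Λ) {x y : E} (hx : x ∈ Ω) (hy : y ∈ Λ) :
    ContDiffAt ℝ 3 (fun y' => negGradX c x y') y := by
  have hc : ContDiffAt ℝ 4 (fun q : E × E => c q.2 q.1) (y, x) :=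
    ContDiffAt.comp (y, x) (contDiffAt_uncurryC hΩ hΛ h0 hx hy)
      (contDiffAt_snd.prodMk contDiffAt_fst)
  have hfd : ContDiffAt ℝ 3 (fun y' => fderiv ℝ (fun x' => c x' y') x) y :=
    ContDiffAt.fderiv (f := fun y' x' => c x' y') (g := fun _ => x) hc contDiffAt_const
      (by norm_num)
  have h2 : ContDiffAt ℝ 3
      (fun y' => (InnerProductSpace.toDual ℝ E).symm (fderiv ℝ (fun x' => c x' y') x)) y :=
    ((InnerProductSpace.toDual ℝ E).symm.contDiff.contDiffAt).comp y hfd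
  exact h2.neg

lemma cExp_keyC {c : E → E → ℝ} {Ω Λ : Set E} (hΩ : IsOpen Ω) (hΛ : IsOpen Λ)
    (h0 : A0 c Ω Λ) (h1 : A1 c Ω Λ) (h2 : A2 c Ω Λ) {xm : E} (hxm : xm ∈ Ω)
    {p : E} (hp : p ∈ cExpDom c Λ xm) :
    cExp c Λ xm p ∈ Λ ∧ negGradX c xm (cExp c Λ xm p) = p ∧
      ContDiffAt ℝ 3 (cExp c Λ xm) p := by
  obtain ⟨y, hyΛ, hFy⟩ := hp
  have hex : ∃ a ∈ Λ, (fun y' => negGradX c xm y') a = p := ⟨y, hyΛ, hFy⟩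
  have hmemY : cExp c Λ xm p ∈ Λ := Function.invFunOn_mem hex
  have hFY : negGradX c xm (cExp c Λ xm p) = p := Function.invFunOn_eq hex
  refine ⟨hmemY, hFY, ?_⟩
  set F : E → E := fun y' => negGradX c xm y' with hFdef
  set Y : E := cExp c Λ xm p with hYdef
  have hF : ContDiffAt ℝ 3 F Y := contDiffAt_negGradXC hΩ hΛ h0 hxm hmemY
  have hbij : Function.Bijective (fderiv ℝ F Y) :=
    h2 xm (subset_closure hxm) Y (subset_closure hmemY)
  set e : E ≃L[ℝ] E :=
    LinearEquiv.toContinuousLinearEquiv (LinearEquiv.ofBijective (fderiv ℝ F Y).toLinearMap hbij)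
    with hedef
  have hcoe : (e : E →L[ℝ] E) = fderiv ℝ F Y := by ext v; rfl
  have hfd : HasFDerivAt F (e : E →L[ℝ] E) Y := by
    rw [hcoe]; exact (hF.differentiableAt (by norm_num)).hasFDerivAt
  have hn : (3 : WithTop ℕ∞) ≠ 0 := by norm_num
  have hga : hF.localInverse hfd hn (F Y) = Y := hF.localInverse_apply_image hfd hn
  have hgc : ContDiffAt ℝ 3 (hF.localInverse hfd hn) (F Y) := hF.to_localInverse hfd hn
  have hrig : ∀ᶠ q in 𝓝 (F Y), F (hF.localInverse hfd hn q) = q :=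
    (hF.hasStrictFDerivAt' hfd hn).eventually_right_inverse
  have hcont : ContinuousAt (hF.localInverse hfd hn) (F Y) :=
    (hF.hasStrictFDerivAt' hfd hn).localInverse_continuousAt
  have hmem : ∀ᶠ q in 𝓝 (F Y), hF.localInverse hfd hn q ∈ Λ := by
    apply hcont.eventually_mem
    rw [hga]
    exact hΛ.mem_nhds hmemY
  have heq : cExp c Λ xm =ᶠ[𝓝 (F Y)] hF.localInverse hfd hn := by
    filter_upwards [hrig, hmem] with q h1q h2q
    have hq : ∃ a ∈ Λ, F a = q := ⟨_, h2q, h1q⟩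
    exact (h1.1 xm hxm) (subset_closure (Function.invFunOn_mem hq))
      (subset_closure h2q) ((Function.invFunOn_eq hq).trans h1q.symm)
  have h3 := hgc.congr_of_eventuallyEq heq
  have h4 : F Y = p := hFY
  rwa [h4] at h3

lemma slide_diffAtC {c : E → E → ℝ} {Ω Λ : Set E} (hΩ : IsOpen Ω) (hΛ : IsOpen Λ)
    (h0 : A0 c Ω Λ) (h1 : A1 c Ω Λ) (h2 : A2 c Ω Λ) {xm : E} (hxm : xm ∈ Ω)
    {y₀ y₁ : E} (hseg : segInTarget c Λ xm y₀ y₁) {x : E} (hx : x ∈ Ω)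
    {θ₀ : ℝ} (hθ₀ : θ₀ ∈ Set.Icc (0:ℝ) 1) :
    DifferentiableAt ℝ (fun θ => slide c Λ xm y₀ y₁ θ x) θ₀ := by
  obtain ⟨hYΛ, hFY, hsm⟩ := cExp_keyC hΩ hΛ h0 h1 h2 hxm (hseg θ₀ hθ₀)
  have hpdiff : DifferentiableAt ℝ (fun θ : ℝ => pSeg c xm y₀ y₁ θ) θ₀ := by
    simp only [pSeg]
    exact (((differentiableAt_const (1:ℝ)).sub differentiableAt_fun_id).smul
      (differentiableAt_const _)).add (differentiableAt_fun_id.fun_smul (differentiableAt_const _))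
  have hY : DifferentiableAt ℝ (fun θ : ℝ => cExp c Λ xm (pSeg c xm y₀ y₁ θ)) θ₀ :=
    (hsm.differentiableAt (by norm_num)).comp θ₀ hpdiff
  have houter : ∀ z ∈ Ω,
      DifferentiableAt ℝ (fun y' => c z y') (cExp c Λ xm (pSeg c xm y₀ y₁ θ₀)) := by
    intro z hz
    have h4 : ContDiffAt ℝ 4 ((fun q : E × E => c q.1 q.2) ∘ (fun y' => (z, y')))
        (cExp c Λ xm (pSeg c xm y₀ y₁ θ₀)) :=
      ContDiffAt.comp _ (contDiffAt_uncurryC hΩ hΛ h0 hz hYΛ)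
        (contDiffAt_const.prodMk contDiffAt_id)
    exact h4.differentiableAt (by norm_num)
  have h1d := ((houter x hx).comp θ₀ hY).neg
  have h2d := (houter xm hxm).comp θ₀ hY
  simp only [slide, ySeg]
  exact DifferentiableAt.add h1d h2d

theorem statement6 (c : E → E → ℝ) (Ω Λ : Set E) (hΩ : IsOpen Ω) (hΛ : IsOpen Λ)
    (h0 : A0 c Ω Λ) (h1 : A1 c Ω Λ) (h2 : A2 c Ω Λ)
    (xm : E) (hxm : xm ∈ Ω) (y₀ : E) (hy₀ : y₀ ∈ Λ) (y₁ : E) (hy₁ : y₁ ∈ Λ)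
    (hseg : segInTarget c Λ xm y₀ y₁)
    (hmono : ∀ θ₁ θ₂ : ℝ, 0 ≤ θ₁ → θ₁ ≤ θ₂ → θ₂ ≤ 1 →
      Splus c Ω Λ xm y₀ y₁ θ₁ ⊆ Splus c Ω Λ xm y₀ y₁ θ₂) :
    ∀ θ ∈ Set.Ioo (0:ℝ) 1, ∀ x ∈ Ω,
      slide c Λ xm y₀ y₁ θ x ≤
        max (slide c Λ xm y₀ y₁ 0 x) (slide c Λ xm y₀ y₁ 1 x) := by
  intro θ hθ x hx
  have hdiff : ∀ t ∈ Set.Icc (0:ℝ) 1,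
      DifferentiableAt ℝ (fun θ' => slide c Λ xm y₀ y₁ θ' x) t := fun t ht =>
    slide_diffAtC hΩ hΛ h0 h1 h2 hxm hseg hx ht
  by_cases h : 0 ≤ deriv (fun θ' => slide c Λ xm y₀ y₁ θ' x) θ
  · have hkey : ∀ t ∈ Set.Icc θ 1, 0 ≤ deriv (fun θ' => slide c Λ xm y₀ y₁ θ' x) t := by
      intro t ht
      exact (hmono θ t hθ.1.le ht.1 ht.2
        (show x ∈ Splus c Ω Λ xm y₀ y₁ θ from ⟨hx, h⟩)).2
    have hmonoOn : MonotoneOn (fun θ' => slide c Λ xm y₀ y₁ θ' x) (Set.Icc θ 1) := by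
      apply monotoneOn_of_deriv_nonneg (convex_Icc θ 1)
      · exact fun t ht => (hdiff t ⟨le_trans hθ.1.le ht.1, ht.2⟩).continuousAt.continuousWithinAt
      · intro t ht
        rw [interior_Icc] at ht
        exact (hdiff t ⟨le_trans hθ.1.le ht.1.le, ht.2.le⟩).differentiableWithinAt
      · intro t ht
        rw [interior_Icc] at ht
        exact hkey t ⟨ht.1.le, ht.2.le⟩
    exact le_max_of_le_right
      (hmonoOn (Set.left_mem_Icc.2 hθ.2.le) (Set.right_mem_Icc.2 hθ.2.le) hθ.2.le)
  · have hkey : ∀ t ∈ Set.Icc (0:ℝ) θ, deriv (fun θ' => slide c Λ xm y₀ y₁ θ' x) t ≤ 0 := by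
      intro t ht
      by_contra hcon
      push_neg at hcon
      exact h (hmono t θ ht.1 ht.2 hθ.2.le
        (show x ∈ Splus c Ω Λ xm y₀ y₁ t from ⟨hx, hcon.le⟩)).2
    have hanti : AntitoneOn (fun θ' => slide c Λ xm y₀ y₁ θ' x) (Set.Icc 0 θ) := by
      apply antitoneOn_of_deriv_nonpos (convex_Icc 0 θ)
      · exact fun t ht => (hdiff t ⟨ht.1, le_trans ht.2 hθ.2.le⟩).continuousAt.continuousWithinAt
      · intro t ht
        rw [interior_Icc] at ht
        exact (hdiff t ⟨ht.1.le, le_trans ht.2.le hθ.2.le⟩).differentiableWithinAt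
      · intro t ht
        rw [interior_Icc] at ht
        exact hkey t ⟨ht.1.le, ht.2.le⟩
    exact le_max_of_le_left
      (hanti (Set.left_mem_Icc.2 hθ.1.le) (Set.right_mem_Icc.2 hθ.1.le) hθ.1.le)

end
end

section
/- Suppose c satisfies (A0), (A1), (A2), and fix θ ∈ [0,1] and a c-segment {y_θ} with respect to x_m lying in Λ. Let q_θ = −∇_yc(x_m, y_θ), ẏ_θ = (d/dθ)y_θ, and W_θ = {w ∈ ℝⁿ : ⟨w, ẏ_θ⟩ = 0}; for w ∈ W_θ with q_θ + w ∈ dom(c*-Exp_{y_θ}), let x_w = c*-Exp_{y_θ}(q_θ + w) (so x_w ∈ S_θ). Let ṗ_θ(x) = (d/dθ)(−∇ₓc(x, y_θ)). Then for every direction η ∈ W_θ, ⟨ṗ_θ(x_w), ∂_η x_w⟩ = 0, where ∂_η x_w denotes the directional derivative of w ↦ x_w in direction η; that is, ṗ_θ(x_w) is orthogonal to the level hypersurface S_θ at x_w. In particular, S_θ is orthogonal to p₁ − p₀ at x_m for every θ. -/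
open scoped RealInnerProductSpace
open Filter Topology Set

noncomputable section

variable {n : ℕ}

local notation "E" => EuclideanSpace ℝ (Fin n)

/-! ### Auxiliary machinery -/

noncomputable def dualIsoL : (E →L[ℝ] ℝ) ≃ₗ[ℝ] E where
  toFun L := (InnerProductSpace.toDual ℝ E).symm L
  invFun x := InnerProductSpace.toDual ℝ E x
  map_add' L M := by simp
  map_smul' a L := by simp
  left_inv L := by simp
  right_inv x := by simp

noncomputable def dualIso : (E →L[ℝ] ℝ) ≃L[ℝ] E := dualIsoL.toContinuousLinearEquiv

lemma dualIso_inner (L : E →L[ℝ] ℝ) (v : E) : ⟪dualIso L, v⟫ = L v :=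
  InnerProductSpace.toDual_symm_apply

lemma key_derivs (c : E → E → ℝ) (Ω Λ : Set E) (hΩ : IsOpen Ω) (hΛ : IsOpen Λ)
    (h0 : A0 c Ω Λ) {x y : E} (hx : x ∈ Ω) (hy : y ∈ Λ) :
    ∃ A D : E →L[ℝ] E,
      HasStrictFDerivAt (fun y' => negGradX c x y') A y ∧
      HasStrictFDerivAt (fun x' => negGradY c x' y) D x ∧
      ∀ u v : E, ⟪A u, v⟫ = ⟪u, D v⟫ := by
  set Φ : E × E → ℝ := fun p => c p.1 p.2 with hΦdef
  have hU : IsOpen (Ω ×ˢ Λ) := hΩ.prod hΛ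
  have hΦ : ContDiffOn ℝ 4 Φ (Ω ×ˢ Λ) := h0.mono (Set.prod_mono subset_closure subset_closure)
  have hdiffΦ : ∀ p ∈ Ω ×ˢ Λ, HasFDerivAt Φ (fderiv ℝ Φ p) p := fun p hp =>
    ((hΦ.differentiableOn (by norm_num)).differentiableAt (hU.mem_nhds hp)).hasFDerivAt
  have hdΦ : ContDiffOn ℝ 3 (fderiv ℝ Φ) (Ω ×ˢ Λ) := hΦ.fderiv_of_isOpen hU (by norm_num)
  have hxy : (x, y) ∈ Ω ×ˢ Λ := ⟨hx, hy⟩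
  set H : (E × E) →L[ℝ] (E × E) →L[ℝ] ℝ := fderiv ℝ (fderiv ℝ Φ) (x, y) with hHdef
  have hH : HasFDerivAt (fderiv ℝ Φ) H (x, y) :=
    ((hdΦ.differentiableOn (by norm_num)).differentiableAt (hU.mem_nhds hxy)).hasFDerivAt
  have hsymm : ∀ a b : E × E, H a b = H b a := fun a b =>
    second_derivative_symmetric_of_eventually
      (Filter.eventually_of_mem (hU.mem_nhds hxy) hdiffΦ) hH a b
  have hng1 : ∀ p ∈ Ω ×ˢ Λ, negGradX c p.1 p.2 =
      -(dualIso ((fderiv ℝ Φ p).comp (ContinuousLinearMap.inl ℝ E E))) := by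
    intro p hp
    have h1 : HasFDerivAt (fun x' => c x' p.2)
        ((fderiv ℝ Φ p).comp (ContinuousLinearMap.inl ℝ E E)) p.1 :=
      ((hdiffΦ (p.1, p.2) hp).comp p.1 (hasFDerivAt_prodMk_left (𝕜 := ℝ) p.1 p.2) :)
    simp only [negGradX, gradient, h1.fderiv]
    rfl
  have hng2 : ∀ p ∈ Ω ×ˢ Λ, negGradY c p.1 p.2 =
      -(dualIso ((fderiv ℝ Φ p).comp (ContinuousLinearMap.inr ℝ E E))) := by
    intro p hp
    have h1 : HasFDerivAt (fun y' => c p.1 y')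
        ((fderiv ℝ Φ p).comp (ContinuousLinearMap.inr ℝ E E)) p.2 :=
      (hdiffΦ (p.1, p.2) hp).comp p.2 (hasFDerivAt_prodMk_right (𝕜 := ℝ) p.1 p.2)
    simp only [negGradY, gradient, h1.fderiv]
    rfl
  set T1 : ((E × E) →L[ℝ] ℝ) →L[ℝ] E := (dualIso.toContinuousLinearMap).comp
    ((ContinuousLinearMap.compL ℝ E (E × E) ℝ).flip (ContinuousLinearMap.inl ℝ E E)) with hT1
  set T2 : ((E × E) →L[ℝ] ℝ) →L[ℝ] E := (dualIso.toContinuousLinearMap).comp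
    ((ContinuousLinearMap.compL ℝ E (E × E) ℝ).flip (ContinuousLinearMap.inr ℝ E E)) with hT2
  have hT1app : ∀ L : (E × E) →L[ℝ] ℝ, T1 L =
      dualIso (L.comp (ContinuousLinearMap.inl ℝ E E)) := by intro L; rfl
  have hT2app : ∀ L : (E × E) →L[ℝ] ℝ, T2 L =
      dualIso (L.comp (ContinuousLinearMap.inr ℝ E E)) := by intro L; rfl
  have hGev : (fun y' => negGradX c x y') =ᶠ[𝓝 y] fun y' => -(T1 (fderiv ℝ Φ (x, y'))) := by
    filter_upwards [hΛ.mem_nhds hy] with y' hy'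
    rw [hT1app]
    exact hng1 (x, y') ⟨hx, hy'⟩
  have hFev : (fun x' => negGradY c x' y) =ᶠ[𝓝 x] fun x' => -(T2 (fderiv ℝ Φ (x', y))) := by
    filter_upwards [hΩ.mem_nhds hx] with x' hx'
    rw [hT2app]
    exact hng2 (x', y) ⟨hx', hy⟩
  have hA0' : HasFDerivAt (fun y' => -(T1 (fderiv ℝ Φ (x, y'))))
      (-(T1.comp (H.comp (ContinuousLinearMap.inr ℝ E E)))) y := by
    have h1 : HasFDerivAt (fun y' => fderiv ℝ Φ (x, y'))
        (H.comp (ContinuousLinearMap.inr ℝ E E)) y :=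
      hH.comp y (hasFDerivAt_prodMk_right x y)
    exact (T1.hasFDerivAt.comp y h1).neg
  have hD0' : HasFDerivAt (fun x' => -(T2 (fderiv ℝ Φ (x', y))))
      (-(T2.comp (H.comp (ContinuousLinearMap.inl ℝ E E)))) x := by
    have h1 : HasFDerivAt (fun x' => fderiv ℝ Φ (x', y))
        (H.comp (ContinuousLinearMap.inl ℝ E E)) x :=
      hH.comp x (hasFDerivAt_prodMk_left x y)
    exact (T2.hasFDerivAt.comp x h1).neg
  have hAd : HasFDerivAt (fun y' => negGradX c x y')
      (-(T1.comp (H.comp (ContinuousLinearMap.inr ℝ E E)))) y :=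
    hA0'.congr_of_eventuallyEq hGev
  have hDd : HasFDerivAt (fun x' => negGradY c x' y)
      (-(T2.comp (H.comp (ContinuousLinearMap.inl ℝ E E)))) x :=
    hD0'.congr_of_eventuallyEq hFev
  have hsm1 : ContDiffAt ℝ 1 (fun y' => negGradX c x y') y := by
    have h3 : ContDiffOn ℝ 1 (fun y' => fderiv ℝ Φ (x, y')) Λ :=
      (hdΦ.of_le (by norm_num)).comp
        ((contDiff_const.prodMk contDiff_id).contDiffOn) (fun y' hy' => ⟨hx, hy'⟩)
    have h2 : ContDiffOn ℝ 1 (fun y' => -(T1 (fderiv ℝ Φ (x, y')))) Λ :=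
      (T1.contDiff.comp_contDiffOn h3).neg
    exact (h2.contDiffAt (hΛ.mem_nhds hy)).congr_of_eventuallyEq hGev
  have hsm2 : ContDiffAt ℝ 1 (fun x' => negGradY c x' y) x := by
    have h3 : ContDiffOn ℝ 1 (fun x' => fderiv ℝ Φ (x', y)) Ω :=
      (hdΦ.of_le (by norm_num)).comp
        ((contDiff_id.prodMk contDiff_const).contDiffOn) (fun x' hx' => ⟨hx', hy⟩)
    have h2 : ContDiffOn ℝ 1 (fun x' => -(T2 (fderiv ℝ Φ (x', y)))) Ω :=
      (T2.contDiff.comp_contDiffOn h3).neg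
    exact (h2.contDiffAt (hΩ.mem_nhds hx)).congr_of_eventuallyEq hFev
  refine ⟨_, _, hsm1.hasStrictFDerivAt' hAd one_ne_zero, hsm2.hasStrictFDerivAt' hDd one_ne_zero, ?_⟩
  intro u v
  have e1 : ⟪(-(T1.comp (H.comp (ContinuousLinearMap.inr ℝ E E)))) u, v⟫
      = -(H ((0 : E), u) (v, (0 : E))) := by
    simp only [ContinuousLinearMap.neg_apply, ContinuousLinearMap.comp_apply,
      ContinuousLinearMap.inr_apply, hT1app, inner_neg_left, dualIso_inner,
      ContinuousLinearMap.inl_apply]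
  have e2 : ⟪(-(T2.comp (H.comp (ContinuousLinearMap.inl ℝ E E)))) v, u⟫
      = -(H (v, (0 : E)) ((0 : E), u)) := by
    simp only [ContinuousLinearMap.neg_apply, ContinuousLinearMap.comp_apply,
      ContinuousLinearMap.inl_apply, hT2app, inner_neg_left, dualIso_inner,
      ContinuousLinearMap.inr_apply]
  rw [e1, real_inner_comm, e2, hsymm]

lemma invFunOn_eventuallyEq_localInverse {f : E → E} {s : Set E} (hs : IsOpen s)
    {a : E} (ha : a ∈ s) (hinj : Set.InjOn f (closure s)) {f' : E ≃L[ℝ] E}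
    (hf : HasStrictFDerivAt f (f' : E →L[ℝ] E) a) :
    ∀ᶠ p in 𝓝 (f a), Function.invFunOn f s p = hf.localInverse f f' a p ∧ p ∈ f '' s := by
  filter_upwards [hf.eventually_right_inverse,
    hf.localInverse_continuousAt.eventually_mem (by
      rw [hf.localInverse_apply_image]; exact hs.mem_nhds ha)] with p h1 h2
  have e1 : f (Function.invFunOn f s p) = p := Function.invFunOn_eq ⟨_, h2, h1⟩
  have m1 : Function.invFunOn f s p ∈ s := Function.invFunOn_mem ⟨_, h2, h1⟩
  exact ⟨hinj (subset_closure m1) (subset_closure h2) (e1.trans h1.symm), ⟨_, h2, h1⟩⟩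

noncomputable def mkEquiv (f : EuclideanSpace ℝ (Fin n) →L[ℝ] EuclideanSpace ℝ (Fin n))
    (hf : Function.Bijective f) : (EuclideanSpace ℝ (Fin n)) ≃L[ℝ] EuclideanSpace ℝ (Fin n) :=
  ContinuousLinearEquiv.ofBijective f (LinearMap.ker_eq_bot.mpr hf.injective)
    (LinearMap.range_eq_top.mpr hf.surjective)

lemma mkEquiv_coe (f : E →L[ℝ] E) (hf : Function.Bijective f) :
    ((mkEquiv f hf : E ≃L[ℝ] E) : E →L[ℝ] E) = f :=
  ContinuousLinearEquiv.coe_ofBijective _ _ _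
theorem statement14 (c : E → E → ℝ) (Ω Λ : Set E) (hΩ : IsOpen Ω) (hΛ : IsOpen Λ)
    (h0 : A0 c Ω Λ) (h1 : A1 c Ω Λ) (h2 : A2 c Ω Λ)
    (xm : E) (hxm : xm ∈ Ω) (y₀ : E) (hy₀ : y₀ ∈ Λ) (y₁ : E) (hy₁ : y₁ ∈ Λ)
    (hseg : segInTarget c Λ xm y₀ y₁) (θ : ℝ) (hθ : θ ∈ Set.Icc (0:ℝ) 1)
    (yθ : E) (hyθ : yθ = ySeg c Λ xm y₀ y₁ θ)
    (qθ : E) (hqθ : qθ = negGradY c xm yθ)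
    (ydot : E) (hydot : ydot = deriv (fun θ' => ySeg c Λ xm y₀ y₁ θ') θ)
    (xw : E → E) (hxw : ∀ w : E, xw w = cExp (cStar c) Ω yθ (qθ + w))
    (pdot : E → E)
    (hpdot : ∀ x : E, pdot x = deriv (fun θ' => negGradX c x (ySeg c Λ xm y₀ y₁ θ')) θ) :
    (∀ w : E, ⟪w, ydot⟫ = 0 → qθ + w ∈ cExpDom (cStar c) Ω yθ →
      ∀ η : E, ⟪η, ydot⟫ = 0 →
        ⟪pdot (xw w), fderiv ℝ xw w η⟫ = 0) ∧
    (qθ ∈ cExpDom (cStar c) Ω yθ →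
      ∀ η : E, ⟪η, ydot⟫ = 0 →
        ⟪negGradX c xm y₁ - negGradX c xm y₀, fderiv ℝ xw 0 η⟫ = 0) := by  -- yθ lies in Λ and maps to pSeg θ
  obtain ⟨ypre, hypre, hGy⟩ := hseg θ hθ
  have hyθΛ : yθ ∈ Λ := by
    rw [hyθ]; exact Function.invFunOn_mem ⟨ypre, hypre, hGy⟩
  have hGyθ : negGradX c xm yθ = pSeg c xm y₀ y₁ θ := by
    rw [hyθ]; exact Function.invFunOn_eq ⟨ypre, hypre, hGy⟩
  -- derivatives at (xm, yθ)
  obtain ⟨A₀, D₀, hA₀, hD₀, hadj₀⟩ := key_derivs c Ω Λ hΩ hΛ h0 hxm hyθΛ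
  have hA₀bij : Function.Bijective A₀ := by
    have h := h2 xm (subset_closure hxm) yθ (subset_closure hyθΛ)
    rwa [hA₀.hasFDerivAt.fderiv] at h
  set Aeq := mkEquiv A₀ hA₀bij with hAeqdef
  have hA₀e : HasStrictFDerivAt (fun y' => negGradX c xm y') ((Aeq : E →L[ℝ] E)) yθ := by
    rw [hAeqdef, mkEquiv_coe]; exact hA₀
  set linvG := hA₀e.localInverse _ _ _ with hlinvG
  have hGloc : ∀ᶠ p in 𝓝 (pSeg c xm y₀ y₁ θ),
      Function.invFunOn (fun y' => negGradX c xm y') Λ p = linvG p ∧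
        p ∈ (fun y' => negGradX c xm y') '' Λ := by
    have h := invFunOn_eventuallyEq_localInverse hΛ hyθΛ (h1.1 xm hxm) hA₀e
    rwa [hGyθ] at h
  -- derivative of pSeg
  have hpSeg : HasDerivAt (fun t : ℝ => pSeg c xm y₀ y₁ t)
      (negGradX c xm y₁ - negGradX c xm y₀) θ := by
    have h := (((hasDerivAt_const θ (1:ℝ)).sub (hasDerivAt_id θ)).smul_const
        (negGradX c xm y₀)).add ((hasDerivAt_id θ).smul_const (negGradX c xm y₁))
    have he : ((0 - 1 : ℝ)) • negGradX c xm y₀ + (1:ℝ) • negGradX c xm y₁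
        = negGradX c xm y₁ - negGradX c xm y₀ := by
      simp [zero_sub, neg_smul, one_smul, neg_add_eq_sub]
    rw [he] at h
    exact h
  -- eventual description of ySeg
  have hyev : ∀ᶠ θ' in 𝓝 θ, (ySeg c Λ xm y₀ y₁ θ' = linvG (pSeg c xm y₀ y₁ θ')
      ∧ pSeg c xm y₀ y₁ θ' ∈ (fun y' => negGradX c xm y') '' Λ) :=
    hpSeg.continuousAt.eventually hGloc
  -- derivative of ySeg
  have hySegD0 : HasDerivAt (fun θ' => linvG (pSeg c xm y₀ y₁ θ'))
      ((Aeq.symm : E →L[ℝ] E) (negGradX c xm y₁ - negGradX c xm y₀)) θ := by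
    have hl := hA₀e.to_localInverse
    rw [hGyθ] at hl
    exact hl.hasFDerivAt.comp_hasDerivAt θ hpSeg
  have hySegD : HasDerivAt (fun θ' => ySeg c Λ xm y₀ y₁ θ')
      ((Aeq.symm : E →L[ℝ] E) (negGradX c xm y₁ - negGradX c xm y₀)) θ :=
    hySegD0.congr_of_eventuallyEq (hyev.mono fun θ' h => h.1)
  have hySegD' : HasDerivAt (fun θ' => ySeg c Λ xm y₀ y₁ θ') ydot θ := by
    rw [hydot, hySegD.deriv]; exact hySegD
  -- main claim (part 1)
  have main : ∀ w : E, ⟪w, ydot⟫ = 0 → qθ + w ∈ cExpDom (cStar c) Ω yθ →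
      ∀ η : E, ⟪η, ydot⟫ = 0 → ⟪pdot (xw w), fderiv ℝ xw w η⟫ = 0 := by
    intro w hw hwdom η hη
    have hdom' : qθ + w ∈ (fun x' => negGradY c x' yθ) '' Ω := hwdom
    have hxwΩ : xw w ∈ Ω := by rw [hxw w]; exact Function.invFunOn_mem hdom'
    have hFxw : negGradY c (xw w) yθ = qθ + w := by
      have h := Function.invFunOn_eq (f := fun x' => negGradY c x' yθ) (s := Ω) hdom'
      rw [hxw w]; exact h
    obtain ⟨A, D, hA, hD, hadj⟩ := key_derivs c Ω Λ hΩ hΛ h0 hxwΩ hyθΛ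
    have hAbij : Function.Bijective A := by
      have h := h2 (xw w) (subset_closure hxwΩ) yθ (subset_closure hyθΛ)
      rwa [hA.hasFDerivAt.fderiv] at h
    have hDinj : Function.Injective D := by
      intro v v' hvv'
      have hz : D (v - v') = 0 := by rw [map_sub, hvv', sub_self]
      obtain ⟨u, hu⟩ := hAbij.2 (v - v')
      have h0' : ⟪A u, v - v'⟫ = 0 := by rw [hadj, hz, inner_zero_right]
      rw [hu] at h0'
      have := inner_self_eq_zero.mp h0'
      exact sub_eq_zero.mp this
    have hDsurj : Function.Surjective D :=
      LinearMap.injective_iff_surjective (f := (D : E →ₗ[ℝ] E)) |>.mp hDinj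
    set Deq := mkEquiv D ⟨hDinj, hDsurj⟩ with hDeqdef
    have hDs : HasStrictFDerivAt (fun x' => negGradY c x' yθ) ((Deq : E →L[ℝ] E)) (xw w) := by
      rw [hDeqdef]; erw [mkEquiv_coe]; exact hD
    set linvF := hDs.localInverse _ _ _ with hlinvF
    have hFloc : ∀ᶠ p in 𝓝 (qθ + w),
        Function.invFunOn (fun x' => negGradY c x' yθ) Ω p = linvF p ∧
          p ∈ (fun x' => negGradY c x' yθ) '' Ω := by
      have h := invFunOn_eventuallyEq_localInverse hΩ hxwΩ (h1.2 yθ hyθΛ) hDs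
      rwa [hFxw] at h
    have hxwev : xw =ᶠ[𝓝 w] fun w' => linvF (qθ + w') := by
      have hcont : ContinuousAt (fun w' : E => qθ + w') w :=
        (continuous_const.add continuous_id).continuousAt
      filter_upwards [hcont.eventually hFloc] with w' hw'
      rw [hxw w']
      exact hw'.1
    have hxwD : HasFDerivAt xw ((Deq.symm : E →L[ℝ] E)) w := by
      have hl := hDs.to_localInverse
      rw [hFxw] at hl
      have h1' : HasFDerivAt (fun w' => linvF (qθ + w'))
          ((Deq.symm : E →L[ℝ] E).comp (ContinuousLinearMap.id ℝ E)) w :=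
        hl.hasFDerivAt.comp w ((hasFDerivAt_id w).const_add qθ)
      rw [ContinuousLinearMap.comp_id] at h1'
      exact h1'.congr_of_eventuallyEq hxwev
    -- compute pdot (xw w)
    have hA' : HasFDerivAt (fun y' => negGradX c (xw w) y') A (ySeg c Λ xm y₀ y₁ θ) := by
      rw [← hyθ]; exact hA.hasFDerivAt
    have hpdotD : HasDerivAt (fun θ' => negGradX c (xw w) (ySeg c Λ xm y₀ y₁ θ'))
        (A ydot) θ := hA'.comp_hasDerivAt θ hySegD'
    have e1 : pdot (xw w) = A ydot := by rw [hpdot (xw w), hpdotD.deriv]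
    have e2 : fderiv ℝ xw w = (Deq.symm : E →L[ℝ] E) := hxwD.fderiv
    rw [e1, e2]
    have e3 : D ((Deq.symm : E →L[ℝ] E) η) = η := by
      have h := Deq.apply_symm_apply η
      rwa [show (Deq : E → E) = (D : E → E) by rw [hDeqdef]; rfl] at h
    rw [hadj, e3, real_inner_comm]
    exact hη
  refine ⟨main, ?_⟩
  intro hq η hη
  have h0' := main 0 (by simp) (by simpa using hq) η hη
  have hxw0 : xw 0 = xm := by
    rw [hxw 0, add_zero, hqθ]
    have m := Function.invFunOn_apply_mem (f := fun x' => negGradY c x' yθ) (s := Ω) hxm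
    have e := Function.invFunOn_apply_eq (f := fun x' => negGradY c x' yθ) (s := Ω) hxm
    exact h1.2 yθ hyθΛ (subset_closure m) (subset_closure hxm) e
  have hpdotxm : pdot xm = negGradX c xm y₁ - negGradX c xm y₀ := by
    rw [hpdot xm]
    have hev : (fun θ' => negGradX c xm (ySeg c Λ xm y₀ y₁ θ')) =ᶠ[𝓝 θ]
        (fun θ' => pSeg c xm y₀ y₁ θ') := by
      filter_upwards [hyev] with θ' h
      exact Function.invFunOn_eq h.2
    rw [hev.deriv_eq, hpSeg.deriv]
  rw [← hpdotxm, ← hxw0]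
  exact h0'

end
end

section
/- Suppose c satisfies (A0), (A1), (A2). If for every x_m ∈ Ω and every c-segment [y₀,y₁]_{x_m} lying in Λ there exists a neighborhood U of x_m in Ω such that f_θ(x) ≤ max(f₀(x), f₁(x)) for all θ ∈ [0,1] and all x ∈ U (i.e. DASM holds locally near x_m), then c satisfies (A3W) on Ω × Λ. -/
open scoped RealInnerProductSpace
open Filter Topology Set

noncomputable section

variable {n : ℕ}

local notation "E" => EuclideanSpace ℝ (Fin n)

private lemma aux_neg_near {χ D : ℝ → ℝ} {q : ℝ}
    (hχ : ∀ᶠ s in 𝓝 (0:ℝ), HasDerivAt χ (D s) s)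
    (hD : HasDerivAt D q 0) (hq : q < 0) (hD0 : D 0 = 0) (hχ0 : χ 0 = 0) :
    ∀ᶠ s in 𝓝[≠] (0:ℝ), χ s < 0 := by
  have hslope : Tendsto (slope D 0) (𝓝[≠] 0) (𝓝 q) := hasDerivAt_iff_tendsto_slope.mp hD
  have hneg : ∀ᶠ s in 𝓝[≠] (0:ℝ), slope D 0 s < 0 := hslope.eventually_lt_const hq
  rw [eventually_nhdsWithin_iff] at hneg
  obtain ⟨ε₁, hε₁, H1⟩ := Metric.eventually_nhds_iff.mp hχ
  obtain ⟨ε₂, hε₂, H2⟩ := Metric.eventually_nhds_iff.mp hneg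
  set ε : ℝ := min ε₁ ε₂ / 2 with hε
  have hεpos : 0 < ε := by positivity
  have hmem : ∀ s : ℝ, |s| ≤ ε → HasDerivAt χ (D s) s := by
    intro s hs
    apply H1
    rw [Real.dist_eq, sub_zero]
    calc |s| ≤ ε := hs
    _ < ε₁ := by rw [hε]; rcases le_total ε₁ ε₂ with h | h <;> simp [min_eq_left, min_eq_right, h] <;> linarith
  have hDneg : ∀ s : ℝ, s ≠ 0 → |s| ≤ ε → D s / s < 0 := by
    intro s hs0 hs
    have := H2 (y := s) (by
      rw [Real.dist_eq, sub_zero]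
      calc |s| ≤ ε := hs
      _ < ε₂ := by rw [hε]; rcases le_total ε₁ ε₂ with h | h <;> simp [min_eq_left, min_eq_right, h] <;> linarith) hs0
    rwa [slope_def_field, hD0, sub_zero, sub_zero] at this
  -- on (0, ε] : D s < 0, so χ is strictly decreasing on [0, ε]
  have hanti : StrictAntiOn χ (Icc 0 ε) := by
    apply strictAntiOn_of_deriv_neg (convex_Icc 0 ε)
    · intro s hs
      exact (hmem s (by rw [abs_of_nonneg hs.1]; exact hs.2)).continuousAt.continuousWithinAt
    · intro s hs
      rw [interior_Icc] at hs
      rw [(hmem s (by rw [abs_of_nonneg hs.1.le]; exact hs.2.le)).deriv]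
      have := hDneg s (ne_of_gt hs.1) (by rw [abs_of_nonneg hs.1.le]; exact hs.2.le)
      rcases div_neg_iff.mp this with ⟨h1, h2⟩ | ⟨h1, h2⟩
      · linarith [hs.1]
      · exact h1
  have hmono : StrictMonoOn χ (Icc (-ε) 0) := by
    apply strictMonoOn_of_deriv_pos (convex_Icc (-ε) 0)
    · intro s hs
      exact (hmem s (by rw [abs_le]; exact ⟨hs.1, by linarith [hs.2]⟩)).continuousAt.continuousWithinAt
    · intro s hs
      rw [interior_Icc] at hs
      rw [(hmem s (by rw [abs_le]; constructor <;> linarith [hs.1, hs.2])).deriv]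
      have := hDneg s (ne_of_lt hs.2) (by rw [abs_le]; constructor <;> linarith [hs.1, hs.2])
      rcases div_neg_iff.mp this with ⟨h1, h2⟩ | ⟨h1, h2⟩
      · exact h1
      · linarith [hs.2]
  rw [eventually_nhdsWithin_iff]
  rw [Metric.eventually_nhds_iff]
  refine ⟨ε, hεpos, fun {s} hdist hs0 => ?_⟩
  rw [Real.dist_eq, sub_zero] at hdist
  rcases lt_or_gt_of_ne (hs0 : s ≠ 0) with h | h
  · have := hmono (a := s) (b := 0) ⟨by linarith [abs_le.mp hdist.le], h.le⟩
      ⟨by linarith, le_refl 0⟩ h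
    rwa [hχ0] at this
  · have := hanti (a := 0) (b := s) ⟨le_refl 0, by linarith⟩
      ⟨h.le, by linarith [abs_le.mp hdist.le]⟩ h
    rwa [hχ0] at this

private lemma aux_max_principle_second {φ₀ φ₁ φm D₀ D₁ Dm : ℝ → ℝ} {q₀ q₁ qm : ℝ}
    (h₀ : ∀ᶠ s in 𝓝 (0:ℝ), HasDerivAt φ₀ (D₀ s) s)
    (h₁ : ∀ᶠ s in 𝓝 (0:ℝ), HasDerivAt φ₁ (D₁ s) s)
    (hm : ∀ᶠ s in 𝓝 (0:ℝ), HasDerivAt φm (Dm s) s)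
    (hD₀ : HasDerivAt D₀ q₀ 0) (hD₁ : HasDerivAt D₁ q₁ 0) (hDm : HasDerivAt Dm qm 0)
    (hv0 : φ₀ 0 = φm 0) (hv1 : φ₁ 0 = φm 0)
    (hd0 : D₀ 0 = Dm 0) (hd1 : D₁ 0 = Dm 0)
    (hle : ∀ᶠ s in 𝓝 (0:ℝ), φm s ≤ max (φ₀ s) (φ₁ s)) :
    qm ≤ max q₀ q₁ := by
  by_contra hcon
  push_neg at hcon
  rw [max_lt_iff] at hcon
  have key : ∀ᶠ s in 𝓝[≠] (0:ℝ), (φ₀ s - φm s < 0 ∧ φ₁ s - φm s < 0) := by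
    have k0 : ∀ᶠ s in 𝓝[≠] (0:ℝ), φ₀ s - φm s < 0 := by
      apply aux_neg_near (D := fun s => D₀ s - Dm s) (q := q₀ - qm)
      · filter_upwards [h₀, hm] with s hs1 hs2; exact hs1.sub hs2
      · exact hD₀.sub hDm
      · linarith [hcon.1]
      · rw [hd0]; ring
      · rw [hv0]; ring
    have k1 : ∀ᶠ s in 𝓝[≠] (0:ℝ), φ₁ s - φm s < 0 := by
      apply aux_neg_near (D := fun s => D₁ s - Dm s) (q := q₁ - qm)
      · filter_upwards [h₁, hm] with s hs1 hs2; exact hs1.sub hs2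
      · exact hD₁.sub hDm
      · linarith [hcon.2]
      · rw [hd1]; ring
      · rw [hv1]; ring
    exact k0.and k1
  have hle' : ∀ᶠ s in 𝓝[≠] (0:ℝ), φm s ≤ max (φ₀ s) (φ₁ s) := hle.filter_mono nhdsWithin_le_nhds
  obtain ⟨s, ⟨h1, h2⟩, h3⟩ := (key.and hle').exists
  rcases max_cases (φ₀ s) (φ₁ s) with ⟨he, _⟩ | ⟨he, _⟩ <;> rw [he] at h3 <;> linarith

private lemma aux_convexOn {δ : ℝ} {g : ℝ → ℝ}
    (H : ∀ lam : ℝ, ∀ a ∈ Ioo (-δ) δ, ∀ b ∈ Ioo (-δ) δ, a < b → ∀ t ∈ Icc a b,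
      g t + lam * t ≤ max (g a + lam * a) (g b + lam * b)) :
    ConvexOn ℝ (Ioo (-δ) δ) g := by
  refine ⟨convex_Ioo _ _, ?_⟩
  intro a ha b hb μ ν hμ hν hμν
  simp only [smul_eq_mul]
  rcases lt_trichotomy a b with hab | rfl | hab
  · have hba : (0:ℝ) < b - a := by linarith
    set lam : ℝ := -(g b - g a)/(b - a) with hlam
    have heq : g a + lam * a = g b + lam * b := by
      rw [hlam]; field_simp; ring
    have hμ'' : μ = 1 - ν := by linarith
    have hν'' : ν ≤ 1 := by linarith
    have ht : μ * a + ν * b ∈ Icc a b := by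
      rw [hμ'']
      constructor
      · nlinarith [mul_nonneg hν (by linarith : (0:ℝ) ≤ b - a)]
      · nlinarith [mul_nonneg (by linarith : (0:ℝ) ≤ 1 - ν) (by linarith : (0:ℝ) ≤ b - a)]
    have := H lam a ha b hb hab _ ht
    rw [max_eq_left heq.ge] at this
    have : g (μ * a + ν * b) ≤ g a + lam * a - lam * (μ * a + ν * b) := by linarith
    calc g (μ * a + ν * b) ≤ g a + lam * a - lam * (μ * a + ν * b) := this
      _ = μ * g a + ν * g b := by
          rw [hμ'']; rw [hlam]; field_simp; ring
  · rw [show μ * a + ν * a = a by rw [← add_mul, hμν, one_mul]]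
    have h'' : μ * g a + ν * g a = g a := by rw [← add_mul, hμν, one_mul]
    linarith
  · have hba : (0:ℝ) < a - b := by linarith
    set lam : ℝ := -(g a - g b)/(a - b) with hlam
    have heq : g b + lam * b = g a + lam * a := by
      rw [hlam]; field_simp; ring
    have hν'' : ν = 1 - μ := by linarith
    have hμ'' : μ ≤ 1 := by linarith
    have ht : μ * a + ν * b ∈ Icc b a := by
      rw [hν'']
      constructor
      · nlinarith [mul_nonneg hμ (by linarith : (0:ℝ) ≤ a - b)]
      · nlinarith [mul_nonneg (by linarith : (0:ℝ) ≤ 1 - μ) (by linarith : (0:ℝ) ≤ a - b)]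
    have := H lam b hb a ha hab _ ht
    rw [max_eq_left heq.ge] at this
    calc g (μ * a + ν * b) ≤ g b + lam * b - lam * (μ * a + ν * b) := by linarith
      _ = μ * g a + ν * g b := by
          rw [hν'']; rw [hlam]; field_simp; ring

private lemma aux_dd_nonneg {δ : ℝ} (hδ : 0 < δ) {g : ℝ → ℝ}
    (hcvx : ConvexOn ℝ (Ioo (-δ) δ) g)
    (hdiff : ∀ t ∈ Ioo (-δ) δ, DifferentiableAt ℝ g t)
    (hd2 : DifferentiableAt ℝ (deriv g) 0) :
    0 ≤ deriv (deriv g) 0 := by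
  have hmono := hcvx.monotoneOn_deriv hdiff
  have h0 : (0:ℝ) ∈ Ioo (-δ) δ := by constructor <;> simp [hδ] <;> linarith
  have hslope : Tendsto (slope (deriv g) 0) (𝓝[≠] 0) (𝓝 (deriv (deriv g) 0)) :=
    hasDerivAt_iff_tendsto_slope.mp hd2.hasDerivAt
  have hslope' : Tendsto (slope (deriv g) 0) (𝓝[>] 0) (𝓝 (deriv (deriv g) 0)) :=
    hslope.mono_left (nhdsWithin_mono _ fun s hs => ne_of_gt hs)
  refine ge_of_tendsto hslope' ?_
  have hev : Ioo (0:ℝ) δ ∈ 𝓝[>] (0:ℝ) := Ioo_mem_nhdsGT_of_mem ⟨le_refl 0, hδ⟩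
  filter_upwards [hev] with s hs
  have : deriv g 0 ≤ deriv g s := hmono h0 ⟨by linarith [hs.1], hs.2⟩ hs.1.le
  rw [slope_def_field]
  apply div_nonneg (by linarith) (by linarith [hs.1])


private lemma aux_affine_mem {a b θ' : ℝ} (hab : a ≤ b) (h0 : 0 ≤ θ') (h1 : θ' ≤ 1) :
    (1-θ')*a + θ'*b ∈ Set.Icc a b := by
  constructor
  · nlinarith
  · nlinarith

set_option maxHeartbeats 1000000 in
theorem statement16 (c : E → E → ℝ) (Ω Λ : Set E) (hΩ : IsOpen Ω) (hΛ : IsOpen Λ)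
    (h0 : A0 c Ω Λ) (h1 : A1 c Ω Λ) (h2 : A2 c Ω Λ)
    (hDASMloc : ∀ xm ∈ Ω, ∀ y₀ ∈ Λ, ∀ y₁ ∈ Λ, segInTarget c Λ xm y₀ y₁ →
      ∃ U : Set E, IsOpen U ∧ xm ∈ U ∧ U ⊆ Ω ∧
        ∀ θ ∈ Set.Icc (0:ℝ) 1, ∀ x ∈ U,
          slide c Λ xm y₀ y₁ θ x ≤
            max (slide c Λ xm y₀ y₁ 0 x) (slide c Λ xm y₀ y₁ 1 x)) :
    A3W c Ω Λ := by
  intro x hx y hy η ξ hortho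
  classical
  by_cases hξ : ξ = 0
  · -- degenerate direction: the inner function is constant
    subst hξ
    have hconst : (fun t : ℝ => -(iteratedFDeriv ℝ 2
          (fun x' => c x' (cExp c Λ x (negGradX c x y + t • (0:E)))) x ![η, η]))
        = fun _ : ℝ => -(iteratedFDeriv ℝ 2
          (fun x' => c x' (cExp c Λ x (negGradX c x y))) x ![η, η]) := by
      funext t; simp
    show (0:ℝ) ≤ deriv (deriv (fun t : ℝ => -(iteratedFDeriv ℝ 2
          (fun x' => c x' (cExp c Λ x (negGradX c x y + t • (0:E)))) x ![η, η]))) 0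
    rw [hconst]
    have : deriv (fun _ : ℝ => -(iteratedFDeriv ℝ 2
          (fun x' => c x' (cExp c Λ x (negGradX c x y))) x ![η, η])) = fun _ : ℝ => (0:ℝ) := by
      funext s; exact deriv_const _ _
    rw [this, deriv_const]
  -- main case : ξ ≠ 0
  have hξpos : (0:ℝ) < ‖ξ‖ := norm_pos_iff.mpr hξ
  -- ## Smoothness infrastructure
  have hC : ∀ a ∈ Ω, ∀ b ∈ Λ, ContDiffAt ℝ 4 (fun q : E × E => c q.1 q.2) (a, b) := by
    intro a ha b hb
    apply h0.contDiffAt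
    apply Filter.mem_of_superset ((hΩ.prod hΛ).mem_nhds (Set.mk_mem_prod ha hb))
    exact Set.prod_mono subset_closure subset_closure
  set P : E × E → (E →L[ℝ] ℝ) := fun q => fderiv ℝ (fun x'' => c x'' q.2) q.1 with hPdef
  have hP : ∀ a ∈ Ω, ∀ b ∈ Λ, ContDiffAt ℝ 3 P (a, b) := by
    intro a ha b hb
    have hre : ContDiffAt ℝ 4 (fun w : (E × E) × E => (w.2, w.1.2)) ((a, b), a) :=
      (contDiff_snd.prodMk (contDiff_snd.comp contDiff_fst)).contDiffAt
    have hf4 : ContDiffAt ℝ 4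
        (Function.uncurry (fun (q : E × E) (x'' : E) => c x'' q.2)) ((a, b), a) := by
      exact (hC a ha b hb).comp ((a, b), a) hre
    have := ContDiffAt.fderiv (m := 3) (f := fun (q : E × E) (x'' : E) => c x'' q.2)
      (g := Prod.fst) hf4 contDiffAt_fst (by norm_num)
    rw [hPdef]; exact this
  set Q2 : E × E → (E →L[ℝ] E →L[ℝ] ℝ) := fun q => fderiv ℝ (fun x'' => P (x'', q.2)) q.1
    with hQdef
  have hQ : ∀ a ∈ Ω, ∀ b ∈ Λ, ContDiffAt ℝ 2 Q2 (a, b) := by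
    intro a ha b hb
    have hre : ContDiffAt ℝ 3 (fun w : (E × E) × E => (w.2, w.1.2)) ((a, b), a) :=
      (contDiff_snd.prodMk (contDiff_snd.comp contDiff_fst)).contDiffAt
    have hf3 : ContDiffAt ℝ 3
        (Function.uncurry (fun (q : E × E) (x'' : E) => P (x'', q.2))) ((a, b), a) := by
      exact (hP a ha b hb).comp ((a, b), a) hre
    have := ContDiffAt.fderiv (m := 2) (f := fun (q : E × E) (x'' : E) => P (x'', q.2))
      (g := Prod.fst) hf3 contDiffAt_fst (by norm_num)
    rw [hQdef]; exact this
  have hfd : ∀ a ∈ Ω, ∀ b ∈ Λ, HasFDerivAt (fun x' => c x' b) (P (a, b)) a := by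
    intro a ha b hb
    have hsm : ContDiffAt ℝ 4 (fun x' : E => c x' b) a :=
      (hC a ha b hb).comp a (contDiffAt_id.prodMk contDiffAt_const)
    have := (hsm.differentiableAt (by norm_num)).hasFDerivAt
    rw [hPdef]; exact this
  have hfd2 : ∀ a ∈ Ω, ∀ b ∈ Λ, HasFDerivAt (fun x' => P (x', b)) (Q2 (a, b)) a := by
    intro a ha b hb
    have hsm : ContDiffAt ℝ 3 (fun x' : E => P (x', b)) a :=
      (hP a ha b hb).comp a (contDiffAt_id.prodMk contDiffAt_const)
    have := (hsm.differentiableAt (by norm_num)).hasFDerivAt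
    rw [hQdef]; exact this
  have hng : ∀ a b : E, negGradX c a b = -(InnerProductSpace.toDual ℝ E).symm (P (a, b)) := by
    intro a b; rw [hPdef]; rfl
  have hinner : ∀ a b v : E, ⟪negGradX c a b, v⟫ = -(P (a, b) v) := by
    intro a b v
    rw [hng, inner_neg_left, InnerProductSpace.toDual_symm_apply]
  -- ## The map N = -∇ₓc(x,·) and its local inverse
  set N : E → E := fun y' => negGradX c x y' with hNdef
  have hN3 : ∀ b ∈ Λ, ContDiffAt ℝ 3 N b := by
    intro b hb
    have h1' : ContDiffAt ℝ 3 (fun y' : E => P (x, y')) b :=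
      (hP x hx b hb).comp b (contDiffAt_const.prodMk contDiffAt_id)
    have h2' : ContDiffAt ℝ 3
        (fun y' : E => (InnerProductSpace.toDual ℝ E).symm (P (x, y'))) b :=
      ((InnerProductSpace.toDual ℝ E).symm.toContinuousLinearEquiv
        : StrongDual ℝ E ≃L[ℝ] E).contDiff.contDiffAt.comp b h1'
    have h3' := h2'.neg
    rw [hNdef]
    exact h3'
  -- derivative of N at y is invertible
  have hbij : Function.Bijective (fderiv ℝ N y) := by
    have := h2 x (subset_closure hx) y (subset_closure hy)
    rwa [hNdef]
  set Leq : E ≃L[ℝ] E :=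
    (LinearEquiv.ofBijective ((fderiv ℝ N y : E →L[ℝ] E) : E →ₗ[ℝ] E) hbij).toContinuousLinearEquiv
    with hLeq
  have hLeqcoe : (Leq : E →L[ℝ] E) = fderiv ℝ N y := by
    ext v; rfl
  have hdN : HasFDerivAt N (Leq : E →L[ℝ] E) y := by
    rw [hLeqcoe]
    exact ((hN3 y hy).differentiableAt (by norm_num)).hasFDerivAt
  have hn13 : (3 : WithTop ℕ∞) ≠ 0 := by norm_num
  set ℓ : E → E := (hN3 y hy).localInverse hdN hn13 with hldef
  have hℓ3 : ContDiffAt ℝ 3 ℓ (N y) := (hN3 y hy).to_localInverse hdN hn13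
  have hS : HasStrictFDerivAt N (Leq : E →L[ℝ] E) y := (hN3 y hy).hasStrictFDerivAt' hdN hn13
  have hri : ∀ᶠ q in 𝓝 (N y), N (ℓ q) = q := hS.eventually_right_inverse
  have htd : Filter.Tendsto ℓ (𝓝 (N y)) (𝓝 y) := hS.localInverse_tendsto
  set p : E := negGradX c x y with hpdef
  have hNyp : N y = p := by rw [hNdef, hpdef]
  rw [hNyp] at hri htd hℓ3
  have hloc : ∀ᶠ q in 𝓝 p,
      cExp c Λ x q = ℓ q ∧ q ∈ cExpDom c Λ x ∧ ℓ q ∈ Λ ∧ N (ℓ q) = q := by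
    have hmemΛ : ∀ᶠ q in 𝓝 p, ℓ q ∈ Λ := htd (hΛ.mem_nhds hy)
    filter_upwards [hri, hmemΛ] with q h1' h2'
    have hex : ∃ a ∈ Λ, (fun y' => negGradX c x y') a = q := ⟨ℓ q, h2', by rw [← hNdef]; exact h1'⟩
    have hdom : q ∈ cExpDom c Λ x := ⟨ℓ q, h2', by rw [← hNdef]; exact h1'⟩
    have hcm : cExp c Λ x q ∈ Λ := Function.invFunOn_mem hex
    have hce : (fun y' => negGradX c x y') (cExp c Λ x q) = q := Function.invFunOn_eq hex
    have hinj := h1.1 x hx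
    have : cExp c Λ x q = ℓ q := by
      apply hinj (subset_closure hcm) (subset_closure h2')
      rw [hce, ← hNdef]; exact h1'.symm
    exact ⟨this, hdom, h2', h1'⟩
  obtain ⟨u, hu, hℓu⟩ := hℓ3.contDiffOn le_rfl (by simp)
  obtain ⟨r, hr, hball⟩ := Metric.mem_nhds_iff.mp (Filter.inter_mem hu hloc)
  set δ : ℝ := r / (2 * ‖ξ‖) with hδdef
  have hδ : 0 < δ := by positivity
  have hmemball : ∀ t : ℝ, |t| < δ → p + t • ξ ∈ Metric.ball p r := by
    intro t ht
    rw [Metric.mem_ball, dist_eq_norm, add_sub_cancel_left, norm_smul, Real.norm_eq_abs]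
    calc |t| * ‖ξ‖ < δ * ‖ξ‖ := by
          apply mul_lt_mul_of_pos_right ht hξpos
      _ = r / 2 := by rw [hδdef]; field_simp
      _ < r := by linarith
  set Y : ℝ → E := fun t => ℓ (p + t • ξ) with hYdef
  have hprop : ∀ t : ℝ, |t| < δ →
      cExp c Λ x (p + t • ξ) = Y t ∧ (p + t • ξ) ∈ cExpDom c Λ x ∧ Y t ∈ Λ ∧
        N (Y t) = p + t • ξ := by
    intro t ht
    have := hball (hmemball t ht)
    exact ⟨this.2.1, this.2.2.1, this.2.2.2.1, this.2.2.2.2⟩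
  have hIooδ : ∀ t : ℝ, t ∈ Ioo (-δ) δ → |t| < δ := fun t ht => abs_lt.mpr ⟨ht.1, ht.2⟩
  have hYsm : ContDiffOn ℝ 3 Y (Ioo (-δ) δ) := by
    have haff : ContDiff ℝ 3 (fun t : ℝ => p + t • ξ) :=
      contDiff_const.add (contDiff_id.smul contDiff_const)
    apply ContDiffOn.comp hℓu (haff.contDiffOn)
    intro t ht
    exact (hball (hmemball t (hIooδ t ht))).1
  set g : ℝ → ℝ := fun t => -(Q2 (x, Y t) η η) with hgdef
  have hg2 : ContDiffOn ℝ 2 g (Ioo (-δ) δ) := by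
    intro t ht
    have hYt : ContDiffWithinAt ℝ 2 Y (Ioo (-δ) δ) t := (hYsm t ht).of_le (by norm_num)
    have hQt : ContDiffWithinAt ℝ 2 (fun t' => Q2 (x, Y t')) (Ioo (-δ) δ) t :=
      ContDiffAt.comp_contDiffWithinAt (g := Q2) (f := fun t' => (x, Y t')) t (hQ x hx (Y t) (hprop t (hIooδ t ht)).2.2.1)
        (contDiffWithinAt_const.prodMk hYt)
    exact ((hQt.clm_apply contDiffWithinAt_const).clm_apply contDiffWithinAt_const).neg
  -- ## key inequality from DASM
  have KEY : ∀ lam : ℝ, ∀ a ∈ Ioo (-δ) δ, ∀ b ∈ Ioo (-δ) δ, a < b → ∀ t ∈ Icc a b,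
      g t + lam * t ≤ max (g a + lam * a) (g b + lam * b) := by
    intro lam a ha b hb hab t htab
    have haδ : |a| < δ := hIooδ a ha
    have hbδ : |b| < δ := hIooδ b hb
    have htIoo : t ∈ Ioo (-δ) δ := ⟨lt_of_lt_of_le ha.1 htab.1, lt_of_le_of_lt htab.2 hb.2⟩
    have htδ : |t| < δ := hIooδ t htIoo
    set κ : ℝ := lam / (2 * ‖ξ‖^2) with hκdef
    have hκlam : 2 * κ * ‖ξ‖^2 = lam := by
      rw [hκdef]; field_simp
    set γ : ℝ → E := fun s => x + s • η + (κ * s^2) • ξ with hγdef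
    have hγ0 : γ 0 = x := by rw [hγdef]; simp
    have hγcont : Continuous γ := by
      rw [hγdef]; fun_prop
    have hγd : ∀ s : ℝ, HasDerivAt γ (η + (2*κ*s) • ξ) s := by
      intro s
      rw [hγdef]
      have d1 : HasDerivAt (fun s' : ℝ => s' • η) ((1:ℝ) • η) s := (hasDerivAt_id s).smul_const η
      have d2 : HasDerivAt (fun s' : ℝ => (κ * s'^2) • ξ) ((κ * (2 * s)) • ξ) s := by
        have h' := ((hasDerivAt_pow 2 s).const_mul κ).smul_const ξ
        simpa using h'
      have h'' := ((hasDerivAt_const s x).add d1).add d2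
      convert h'' using 1
      all_goals first | rfl | module
    set Dfun : E → ℝ → ℝ := fun y' s => -(P (γ s, y') (η + (2*κ*s) • ξ)) with hDfun
    set φfun : E → ℝ → ℝ := fun y' s => -(c (γ s) y') + c x y' with hφfun
    have hpack : ∀ τ : ℝ, |τ| < δ →
        (∀ᶠ s in 𝓝 (0:ℝ), HasDerivAt (φfun (Y τ)) (Dfun (Y τ) s) s)
        ∧ HasDerivAt (Dfun (Y τ)) (g τ + 2*κ*⟪p, ξ⟫ + lam * τ) 0
        ∧ Dfun (Y τ) 0 = ⟪p, η⟫ := by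
      intro τ hτ
      have hYτΛ : Y τ ∈ Λ := (hprop τ hτ).2.2.1
      have hNYτ : negGradX c x (Y τ) = p + τ • ξ := by
        have h' := (hprop τ hτ).2.2.2
        rw [hNdef] at h'
        exact h'
      refine ⟨?_, ?_, ?_⟩
      · have hΩev : ∀ᶠ s in 𝓝 (0:ℝ), γ s ∈ Ω := by
          have hT : Filter.Tendsto γ (𝓝 0) (𝓝 x) := by
            rw [← hγ0]; exact hγcont.continuousAt
          exact hT (hΩ.mem_nhds hx)
        filter_upwards [hΩev] with s hs
        have hcd : HasDerivAt (fun s' => c (γ s') (Y τ)) (P (γ s, Y τ) (η + (2*κ*s) • ξ)) s :=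
          (hfd (γ s) hs (Y τ) hYτΛ).comp_hasDerivAt s (hγd s)
        exact (hcd.neg).add_const (c x (Y τ))
      · -- second derivative of the sliding mountain at s = 0
        have hfx : HasFDerivAt (fun x' => P (x', Y τ)) (Q2 (x, Y τ)) (γ 0) := by
          rw [hγ0]; exact hfd2 x hx (Y τ) hYτΛ
        have hB0 := hfx.comp_hasDerivAt 0 (hγd 0)
        have hB : HasDerivAt (fun s => P (γ s, Y τ)) (Q2 (x, Y τ) η) 0 := by
          convert hB0 using 1
          all_goals first | rfl | simp
        have hv : HasDerivAt (fun s : ℝ => η + (2*κ*s) • ξ) ((2*κ) • ξ) 0 := by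
          have h' := ((hasDerivAt_id (0:ℝ)).const_mul (2*κ)).smul_const ξ
          have h'' := (hasDerivAt_const (0:ℝ) η).add h'
          convert h'' using 1
          all_goals first | rfl | module
        have happ := (hB.clm_apply hv).neg
        have hPξ : -(P (x, Y τ) ξ) = ⟪p, ξ⟫ + τ * ‖ξ‖^2 := by
          have h1' := hinner x (Y τ) ξ
          rw [hNYτ] at h1'
          rw [← h1', inner_add_left, real_inner_smul_left, real_inner_self_eq_norm_sq]
        have hval : -((Q2 (x, Y τ) η) ((fun s : ℝ => η + (2*κ*s) • ξ) 0)
              + (P (γ 0, Y τ)) ((2*κ) • ξ))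
            = g τ + 2*κ*⟪p, ξ⟫ + lam * τ := by
          rw [hγ0]
          simp only [mul_zero, zero_smul, add_zero, map_smul, smul_eq_mul]
          have hgτ : g τ = -(Q2 (x, Y τ) η η) := by rw [hgdef]
          have hexp : 2*κ*(τ * ‖ξ‖^2) = lam * τ := by rw [← hκlam]; ring
          calc -((Q2 (x, Y τ) η) η + 2*κ * (P (x, Y τ)) ξ)
              = -(Q2 (x, Y τ) η η) + 2*κ * (-(P (x, Y τ) ξ)) := by ring
            _ = -(Q2 (x, Y τ) η η) + 2*κ * (⟪p, ξ⟫ + τ * ‖ξ‖^2) := by rw [hPξ]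
            _ = -(Q2 (x, Y τ) η η) + 2*κ*⟪p, ξ⟫ + 2*κ*(τ * ‖ξ‖^2) := by ring
            _ = g τ + 2*κ*⟪p, ξ⟫ + lam * τ := by rw [hexp, hgτ]
        rw [hDfun]
        convert happ using 1
        all_goals first | rfl | exact hval.symm
      · rw [hDfun]
        simp only [mul_zero, zero_smul, add_zero, hγ0]
        have h1' := hinner x (Y τ) η
        rw [hNYτ] at h1'
        rw [← h1', inner_add_left, real_inner_smul_left]
        have hξη : ⟪ξ, η⟫ = 0 := by rw [real_inner_comm]; exact hortho
        rw [hξη]; ring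
    -- endpoints of the c-segment
    have hYaΛ : Y a ∈ Λ := (hprop a haδ).2.2.1
    have hYbΛ : Y b ∈ Λ := (hprop b hbδ).2.2.1
    have hNa : negGradX c x (Y a) = p + a • ξ := by
      have h' := (hprop a haδ).2.2.2; rw [hNdef] at h'; exact h'
    have hNb : negGradX c x (Y b) = p + b • ξ := by
      have h' := (hprop b hbδ).2.2.2; rw [hNdef] at h'; exact h'
    have hIccIoo : ∀ θ' : ℝ, θ' ∈ Icc (0:ℝ) 1 → (1-θ')*a + θ'*b ∈ Icc a b :=
      fun θ' hθ' => aux_affine_mem hab.le hθ'.1 hθ'.2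
    have hIccδ : ∀ τ ∈ Icc a b, |τ| < δ := fun τ hτ =>
      hIooδ τ ⟨lt_of_lt_of_le ha.1 hτ.1, lt_of_le_of_lt hτ.2 hb.2⟩
    have hpseg : ∀ θ' : ℝ, pSeg c x (Y a) (Y b) θ' = p + ((1-θ')*a + θ'*b) • ξ := by
      intro θ'
      show (1 - θ') • negGradX c x (Y a) + θ' • negGradX c x (Y b) = _
      rw [hNa, hNb]
      all_goals first | rfl | module
    have hseg : segInTarget c Λ x (Y a) (Y b) := by
      intro θ' hθ'
      rw [hpseg]
      exact (hprop _ (hIccδ _ (hIccIoo θ' hθ'))).2.1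
    obtain ⟨U, hUopen, hxU, hUΩ, hDASM⟩ := hDASMloc x hx (Y a) hYaΛ (Y b) hYbΛ hseg
    have hyseg : ∀ θ' ∈ Icc (0:ℝ) 1, ySeg c Λ x (Y a) (Y b) θ' = Y ((1-θ')*a + θ'*b) := by
      intro θ' hθ'
      show cExp c Λ x (pSeg c x (Y a) (Y b) θ') = _
      rw [hpseg]
      exact (hprop _ (hIccδ _ (hIccIoo θ' hθ'))).1
    have hslide : ∀ θ' ∈ Icc (0:ℝ) 1, ∀ s : ℝ, slide c Λ x (Y a) (Y b) θ' (γ s)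
        = φfun (Y ((1-θ')*a + θ'*b)) s := by
      intro θ' hθ' s
      show -(c (γ s) (ySeg c Λ x (Y a) (Y b) θ')) + c x (ySeg c Λ x (Y a) (Y b) θ')
        = φfun (Y ((1-θ')*a + θ'*b)) s
      rw [hyseg θ' hθ', hφfun]
    -- the parameter θ giving t
    have hba : (0:ℝ) < b - a := by linarith
    set θ : ℝ := (t - a)/(b - a) with hθdef
    have hθmem : θ ∈ Icc (0:ℝ) 1 := by
      constructor
      · apply div_nonneg (by linarith [htab.1]) hba.le
      · rw [hθdef, div_le_one hba]; linarith [htab.2]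
    have htθ : (1-θ)*a + θ*b = t := by
      rw [hθdef]; field_simp; ring
    obtain ⟨hev_a, hD2a, hD0a⟩ := hpack a haδ
    obtain ⟨hev_b, hD2b, hD0b⟩ := hpack b hbδ
    obtain ⟨hev_t, hD2t, hD0t⟩ := hpack t htδ
    have hle : ∀ᶠ s in 𝓝 (0:ℝ), φfun (Y t) s ≤ max (φfun (Y a) s) (φfun (Y b) s) := by
      have hUev : ∀ᶠ s in 𝓝 (0:ℝ), γ s ∈ U := by
        have hT : Filter.Tendsto γ (𝓝 0) (𝓝 x) := by
          rw [← hγ0]; exact hγcont.continuousAt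
        exact hT (hUopen.mem_nhds hxU)
      filter_upwards [hUev] with s hs
      have hD' := hDASM θ hθmem (γ s) hs
      rw [hslide θ hθmem s, hslide 0 (by norm_num) s, hslide 1 (by norm_num) s] at hD'
      have e0 : (1-(0:ℝ))*a + 0*b = a := by ring
      have e1 : (1-(1:ℝ))*a + 1*b = b := by ring
      rw [e0, e1, htθ] at hD'
      exact hD'
    have hmain : g t + 2*κ*⟪p, ξ⟫ + lam * t ≤
        max (g a + 2*κ*⟪p, ξ⟫ + lam * a) (g b + 2*κ*⟪p, ξ⟫ + lam * b) := by
      apply aux_max_principle_second hev_a hev_b hev_t hD2a hD2b hD2t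
      · rw [hφfun]; simp only [hγ0]; ring
      · rw [hφfun]; simp only [hγ0]; ring
      · rw [hD0a, hD0t]
      · rw [hD0b, hD0t]
      · exact hle
    have hmax : max (g a + 2*κ*⟪p, ξ⟫ + lam * a) (g b + 2*κ*⟪p, ξ⟫ + lam * b)
        = max (g a + lam * a) (g b + lam * b) + 2*κ*⟪p, ξ⟫ := by
      rcases le_total (g a + lam * a) (g b + lam * b) with h' | h'
      · rw [max_eq_right h', max_eq_right (by linarith)]; ring
      · rw [max_eq_left h', max_eq_left (by linarith)]; ring
    rw [hmax] at hmain
    linarith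

  -- ## conclusion
  have hcvx : ConvexOn ℝ (Ioo (-δ) δ) g := aux_convexOn KEY
  have h0mem : (0:ℝ) ∈ Ioo (-δ) δ := ⟨by linarith, hδ⟩
  have hdiff : ∀ t ∈ Ioo (-δ) δ, DifferentiableAt ℝ g t := by
    intro t ht
    exact (hg2.differentiableOn (by norm_num)).differentiableAt
      (isOpen_Ioo.mem_nhds ht)
  have hd2 : DifferentiableAt ℝ (deriv g) 0 := by
    have := hg2.deriv_of_isOpen isOpen_Ioo (m := 1) (by norm_num)
    exact (this.differentiableOn (by norm_num)).differentiableAt (isOpen_Ioo.mem_nhds h0mem)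
  have hfinal : (0:ℝ) ≤ deriv (deriv g) 0 := aux_dd_nonneg hδ hcvx hdiff hd2
  -- identify cSectional with deriv (deriv g) 0
  have hFg : ∀ t ∈ Ioo (-δ) δ,
      -(iteratedFDeriv ℝ 2 (fun x' => c x' (cExp c Λ x (negGradX c x y + t • ξ))) x ![η, η])
        = g t := by
    intro t ht
    have hY : cExp c Λ x (negGradX c x y + t • ξ) = Y t := by
      rw [← hpdef]; exact (hprop t (hIooδ t ht)).1
    rw [hY, iteratedFDeriv_two_apply]
    simp only [Matrix.cons_val_zero, Matrix.cons_val_one, Matrix.head_cons]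
    rfl
  have hEq : (fun t : ℝ =>
      -(iteratedFDeriv ℝ 2 (fun x' => c x' (cExp c Λ x (negGradX c x y + t • ξ))) x ![η, η]))
      =ᶠ[𝓝 (0:ℝ)] g :=
    Filter.eventually_of_mem (isOpen_Ioo.mem_nhds h0mem) hFg
  have hEqd : deriv (fun t : ℝ =>
      -(iteratedFDeriv ℝ 2 (fun x' => c x' (cExp c Λ x (negGradX c x y + t • ξ))) x ![η, η]))
      =ᶠ[𝓝 (0:ℝ)] deriv g := by
    have h' := hEq.eventually_nhds
    filter_upwards [h'] with t ht
    exact Filter.EventuallyEq.deriv_eq ht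
  show (0:ℝ) ≤ deriv (deriv (fun t : ℝ =>
      -(iteratedFDeriv ℝ 2 (fun x' => c x' (cExp c Λ x (negGradX c x y + t • ξ))) x ![η, η]))) 0
  rw [hEqd.deriv_eq]
  exact hfinal

end
end

section
/- Let f, g : ℝⁿ → ℝ be C¹ convex functions and suppose there is L < 1 with ‖∇f(x)‖ ≤ L and ‖∇g(y)‖ ≤ L for all x, y ∈ ℝⁿ. Define the cost c(x,y) = ‖x − y‖² + (f(x) − g(y))², so that −∇ₓc(x,y) = 2(y − x) + 2(g(y) − f(x))∇f(x). Then for every fixed x ∈ ℝⁿ, the map y ↦ −∇ₓc(x,y) from ℝⁿ to ℝⁿ is proper: ‖−∇ₓc(x,y)‖ → ∞ as ‖y‖ → ∞ (equivalently, preimages of bounded sets are bounded). -/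
open scoped RealInnerProductSpace

/-- For the cost `c(x,y) = ‖x-y‖² + (f(x) - g(y))²` with `f, g` convex `C¹` functions whose
gradients are bounded by `L < 1`, the map `y ↦ -∇ₓ c(x,y)` is proper for every fixed `x`:
`‖-∇ₓ c(x,y)‖ → ∞` as `‖y‖ → ∞`. -/
theorem statement18 {n : ℕ} (f g : EuclideanSpace ℝ (Fin n) → ℝ)
    (hf : ContDiff ℝ 1 f) (hg : ContDiff ℝ 1 g)
    (hfc : ConvexOn ℝ Set.univ f) (hgc : ConvexOn ℝ Set.univ g)
    (L : ℝ) (hL : L < 1)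
    (hfL : ∀ x, ‖gradient f x‖ ≤ L) (hgL : ∀ y, ‖gradient g y‖ ≤ L)
    (c : EuclideanSpace ℝ (Fin n) → EuclideanSpace ℝ (Fin n) → ℝ)
    (hc : ∀ x y, c x y = ‖x - y‖ ^ 2 + (f x - g y) ^ 2)
    (x : EuclideanSpace ℝ (Fin n)) :
    ∀ M : ℝ, ∃ R : ℝ, ∀ y : EuclideanSpace ℝ (Fin n), R ≤ ‖y‖ →
      M ≤ ‖-(gradient (fun x' => c x' y) x)‖ := by
  -- gradient computation
  have hgrad : ∀ y, gradient (fun x' => c x' y) x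
      = (2:ℝ) • (x - y) + (2*(f x - g y)) • gradient f x := by
    intro y
    have hfd : HasFDerivAt f ((InnerProductSpace.toDual ℝ _) (gradient f x)) x :=
      ((hf.differentiable one_ne_zero) x).hasGradientAt.hasFDerivAt
    have hid : HasFDerivAt (fun x' : EuclideanSpace ℝ (Fin n) => x' - y)
        (ContinuousLinearMap.id ℝ _) x := (hasFDerivAt_id x).sub_const y
    have h1 := hid.inner ℝ hid
    have h2 := (hfd.sub_const (g y)).mul (hfd.sub_const (g y))
    have h3 := h1.add h2
    have h4 : HasFDerivAt (fun x' => c x' y)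
        ((InnerProductSpace.toDual ℝ _)
          ((2:ℝ) • (x - y) + (2*(f x - g y)) • gradient f x)) x := by
      refine (h3.congr_fderiv ?_).congr_of_eventuallyEq (Filter.Eventually.of_forall fun x' => ?_)
      · ext w
        simp [fderivInnerCLM, inner_add_left, inner_smul_left, real_inner_comm, sub_mul,
          mul_sub, Finset.sum_sub_distrib, mul_comm]
        rw [inner_sub_right, real_inner_comm w x, real_inner_comm w y]
        ring
      · simp only [Pi.add_apply, Pi.mul_apply]; rw [hc, real_inner_self_eq_norm_sq]; ring
    exact (hasGradientAt_iff_hasFDerivAt.mpr h4).gradient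
  have hL0 : 0 ≤ L := le_trans (norm_nonneg _) (hfL x)
  -- g is L-Lipschitz
  have hgLip : ∀ y, |g y - g x| ≤ L * ‖y - x‖ := by
    intro y
    have hfderiv : ∀ z ∈ (Set.univ : Set (EuclideanSpace ℝ (Fin n))), ‖fderiv ℝ g z‖ ≤ L := by
      intro z _
      have : ‖gradient g z‖ = ‖fderiv ℝ g z‖ := by
        rw [gradient]; exact LinearIsometryEquiv.norm_map _ _
      rw [← this]; exact hgL z
    have := convex_univ.norm_image_sub_le_of_norm_fderiv_le
      (fun z _ => (hg.differentiable one_ne_zero) z) hfderiv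
      (Set.mem_univ x) (Set.mem_univ y)
    simpa using this
  intro M
  set C : ℝ := |f x - g x| with hC
  have hden : 0 < 2 * (1 - L^2) := by nlinarith
  refine ⟨‖x‖ + (M + 2 * L * C) / (2 * (1 - L^2)) + 1, fun y hy => ?_⟩
  rw [hgrad y, norm_neg]
  have key : 2 * ‖x - y‖ - |2*(f x - g y)| * L ≤
      ‖(2:ℝ) • (x - y) + (2*(f x - g y)) • gradient f x‖ := by
    have h1 : ‖(2:ℝ) • (x - y)‖ - ‖(2*(f x - g y)) • gradient f x‖ ≤
        ‖(2:ℝ) • (x - y) + (2*(f x - g y)) • gradient f x‖ := by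
      have h0 := norm_add_le ((2:ℝ) • (x - y) + (2*(f x - g y)) • gradient f x)
        (-((2*(f x - g y)) • gradient f x))
      simp only [add_neg_cancel_right, norm_neg] at h0
      linarith
    have h2 : ‖(2:ℝ) • (x - y)‖ = 2 * ‖x - y‖ := by
      rw [norm_smul]; simp
    have h3 : ‖(2*(f x - g y)) • gradient f x‖ ≤ |2*(f x - g y)| * L := by
      rw [norm_smul, Real.norm_eq_abs]
      exact mul_le_mul_of_nonneg_left (hfL x) (abs_nonneg _)
    linarith
  have hfg : |2*(f x - g y)| ≤ 2 * (C + L * ‖x - y‖) := by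
    have : |f x - g y| ≤ C + L * ‖y - x‖ := by
      calc |f x - g y| = |(f x - g x) + (g x - g y)| := by ring_nf
        _ ≤ |f x - g x| + |g x - g y| := abs_add_le _ _
        _ ≤ C + L * ‖y - x‖ := by
            have := hgLip y
            rw [abs_sub_comm] at this
            linarith
    rw [abs_mul, ← norm_neg (y - x), neg_sub] at *
    simp only [abs_two]
    nlinarith [this]
  have hxy : ‖y‖ - ‖x‖ ≤ ‖x - y‖ := by
    have := norm_sub_norm_le y x
    rw [← norm_neg (y - x), neg_sub] at this
    linarith
  have hmain : 2 * (1 - L^2) * ‖x - y‖ - 2 * L * C ≤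
      ‖(2:ℝ) • (x - y) + (2*(f x - g y)) • gradient f x‖ := by
    have : |2*(f x - g y)| * L ≤ 2 * (C + L * ‖x - y‖) * L :=
      mul_le_mul_of_nonneg_right hfg hL0
    nlinarith [key]
  have hbig : M + 2 * L * C ≤ 2 * (1 - L^2) * ‖x - y‖ := by
    have h5 : (M + 2 * L * C) / (2 * (1 - L^2)) ≤ ‖y‖ - ‖x‖ := by linarith
    have h6 : M + 2 * L * C ≤ 2 * (1 - L^2) * (‖y‖ - ‖x‖) := by
      rw [div_le_iff₀ hden] at h5; linarith [h5]
    nlinarith [hxy, hden]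
  linarith
end

section
/- Let n ≥ 2 and consider the cost c(x,y) = −(1/2)·log‖x − y‖² on {(x,y) ∈ ℝⁿ × ℝⁿ : x ≠ y}. Then −∇ₓc(x,y) = (y − x)/‖x − y‖², so the c-exponential map is c-Expₓ(p) = x + p/‖p‖² for p ≠ 0. For every x ∈ ℝⁿ, every p ∈ ℝⁿ with p ≠ 0, and all nonzero vectors η, ξ ∈ ℝⁿ with ⟨η, ξ⟩ = 0, the c-sectional curvature is strictly positive: (d²/dt²)|_{t=0} [−D²ₓₓc](x, x + (p + tξ)/‖p + tξ‖²)(η, η) > 0. -/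
open scoped RealInnerProductSpace

section Aux

variable {E : Type*} [NormedAddCommGroup E] [InnerProductSpace ℝ E]

private lemma aux_hasFDerivAt (y z : E) (hz : z ≠ y) :
    HasFDerivAt (fun x' : E => -(1/2 : ℝ) * Real.log (‖x' - y‖ ^ 2))
      ((-(‖z - y‖ ^ 2)⁻¹ : ℝ) • innerSL ℝ (z - y)) z := by
  have hz0 : z - y ≠ 0 := sub_ne_zero.mpr hz
  have hD : (0:ℝ) < ‖z - y‖ ^ 2 := pow_pos (norm_pos_iff.mpr hz0) 2
  have h1 : HasFDerivAt (fun x' : E => ‖x' - y‖ ^ 2) (2 • (innerSL ℝ (z - y))) z := by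
    simpa using ((hasFDerivAt_id z).sub_const y).norm_sq
  have h2 : HasDerivAt Real.log (‖z - y‖ ^ 2)⁻¹ (‖z - y‖ ^ 2) := Real.hasDerivAt_log hD.ne'
  have h3 := (h2.comp_hasFDerivAt z h1).const_mul (-(1/2 : ℝ))
  have hL : ((-(‖z - y‖ ^ 2)⁻¹ : ℝ) • innerSL ℝ (z - y) : E →L[ℝ] ℝ)
      = (-(1/2 : ℝ)) • ((‖z - y‖ ^ 2)⁻¹ • (2 • (innerSL ℝ (z - y)))) := by
    ext v
    simp [smul_smul]
    ring
  rw [hL]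
  exact h3

private lemma aux_fderiv_apply (y z : E) (hz : z ≠ y) (v : E) :
    fderiv ℝ (fun x' : E => -(1/2 : ℝ) * Real.log (‖x' - y‖ ^ 2)) z v
      = -(⟪z - y, v⟫ * (‖z - y‖ ^ 2)⁻¹) := by
  rw [(aux_hasFDerivAt y z hz).fderiv]
  simp [inner_sub_left]
  ring

private lemma aux_iterated (y z : E) (hz : z ≠ y) (η : E) :
    iteratedFDeriv ℝ 2 (fun x' : E => -(1/2 : ℝ) * Real.log (‖x' - y‖ ^ 2)) z ![η, η]
      = (2 * ⟪z - y, η⟫ ^ 2 - ‖η‖ ^ 2 * ‖z - y‖ ^ 2) / ‖z - y‖ ^ 4 := by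
  set f : E → ℝ := fun x' => -(1/2 : ℝ) * Real.log (‖x' - y‖ ^ 2) with hf
  have hz0 : z - y ≠ 0 := sub_ne_zero.mpr hz
  have hDpos : (0:ℝ) < ‖z - y‖ ^ 2 := pow_pos (norm_pos_iff.mpr hz0) 2
  have hmem : {w : E | w ≠ y} ∈ nhds z := isOpen_ne.mem_nhds hz
  have hev : fderiv ℝ f =ᶠ[nhds z]
      fun w => (-(‖w - y‖ ^ 2)⁻¹ : ℝ) • innerSL ℝ (w - y) := by
    filter_upwards [hmem] with w hw
    exact (aux_hasFDerivAt y w hw).fderiv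
  have hdiffL : DifferentiableAt ℝ
      (fun w : E => (-(‖w - y‖ ^ 2)⁻¹ : ℝ) • innerSL ℝ (w - y)) z := by
    have h1 : DifferentiableAt ℝ (fun w : E => ‖w - y‖ ^ 2) z :=
      (((hasFDerivAt_id z).sub_const y).norm_sq).differentiableAt
    have h2 : DifferentiableAt ℝ (fun w : E => (-(‖w - y‖ ^ 2)⁻¹ : ℝ)) z :=
      (h1.inv hDpos.ne').neg
    have h3 : DifferentiableAt ℝ (fun w : E => innerSL ℝ (w - y)) z :=
      (innerSL ℝ).differentiableAt.comp z (differentiableAt_id.sub_const y)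
    exact h2.smul h3
  have hdiff : DifferentiableAt ℝ (fderiv ℝ f) z :=
    hdiffL.congr_of_eventuallyEq hev
  rw [iteratedFDeriv_two_apply]
  have hm0 : (![η, η] : Fin 2 → E) 0 = η := rfl
  have hm1 : (![η, η] : Fin 2 → E) 1 = η := rfl
  rw [hm0, hm1]
  have happ : fderiv ℝ (fun w => fderiv ℝ f w η) z
      = (fderiv ℝ (fderiv ℝ f) z).flip η := by
    rw [fderiv_clm_apply hdiff (differentiableAt_const η)]
    simp
  have hswap : fderiv ℝ (fderiv ℝ f) z η η = fderiv ℝ (fun w => fderiv ℝ f w η) z η := by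
    rw [happ]; rfl
  rw [hswap]
  have hev2 : (fun w => fderiv ℝ f w η) =ᶠ[nhds z]
      fun w => -(⟪η, w - y⟫ * (‖w - y‖ ^ 2)⁻¹) := by
    filter_upwards [hmem] with w hw
    rw [aux_fderiv_apply y w hw η, real_inner_comm]
  rw [hev2.fderiv_eq]
  have hN : HasFDerivAt (fun w : E => ⟪η, w - y⟫) (innerSL ℝ η) z := by
    exact (innerSL ℝ η).hasFDerivAt.comp z ((hasFDerivAt_id z).sub_const y)
  have hD2 : HasFDerivAt (fun w : E => ‖w - y‖ ^ 2) (2 • innerSL ℝ (z - y)) z := by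
    simpa using ((hasFDerivAt_id z).sub_const y).norm_sq
  have hinv : HasFDerivAt (fun w : E => (‖w - y‖ ^ 2)⁻¹)
      ((-((‖z - y‖ ^ 2) ^ 2)⁻¹) • (2 • innerSL ℝ (z - y))) z :=
    (hasDerivAt_inv hDpos.ne').comp_hasFDerivAt z hD2
  have hF : HasFDerivAt (fun w => -(⟪η, w - y⟫ * (‖w - y‖ ^ 2)⁻¹)) _ z := (hN.mul hinv).neg
  rw [hF.fderiv]
  have hcz : (inner ℝ η (z - y) : ℝ) = inner ℝ (z - y) η := real_inner_comm (z - y) η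
  simp only [ContinuousLinearMap.neg_apply, ContinuousLinearMap.add_apply,
    ContinuousLinearMap.smul_apply, innerSL_apply_apply, smul_eq_mul,
    real_inner_self_eq_norm_sq, hcz]
  have h4 : ‖z - y‖ ≠ 0 := norm_ne_zero_iff.mpr hz0
  field_simp
  ring

end Aux

/-- For the logarithmic cost `c(x,y) = -(1/2) log ‖x-y‖²` on `ℝⁿ × ℝⁿ \ {x = y}`, `n ≥ 2`,
with `c`-exponential map `c-Expₓ(p) = x + p/‖p‖²`, the `c`-sectional curvature
`(d²/dt²)|₀ [-D²ₓₓ c](x, c-Expₓ(p + tξ))(η,η)` is strictly positive for all nonzero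
orthogonal vectors `η, ξ` and all `p ≠ 0`. -/
theorem statement19 {n : ℕ} (hn : 2 ≤ n)
    (c : EuclideanSpace ℝ (Fin n) → EuclideanSpace ℝ (Fin n) → ℝ)
    (hc : ∀ x y : EuclideanSpace ℝ (Fin n), c x y = -(1/2 : ℝ) * Real.log (‖x - y‖ ^ 2))
    (x p η ξ : EuclideanSpace ℝ (Fin n))
    (hp : p ≠ 0) (hη : η ≠ 0) (hξ : ξ ≠ 0) (hperp : ⟪η, ξ⟫ = 0) :
    0 < deriv (deriv (fun t : ℝ =>
      -(iteratedFDeriv ℝ 2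
          (fun x' => c x' (x + (‖p + t • ξ‖ ^ 2)⁻¹ • (p + t • ξ))) x ![η, η]))) 0 := by
  have hηp : (0:ℝ) < ‖η‖ := norm_pos_iff.mpr hη
  have hξp : (0:ℝ) < ‖ξ‖ := norm_pos_iff.mpr hξ
  set G : ℝ → ℝ := fun t =>
      -(iteratedFDeriv ℝ 2
          (fun x' => c x' (x + (‖p + t • ξ‖ ^ 2)⁻¹ • (p + t • ξ))) x ![η, η]) with hG
  set U : Set ℝ := {t | p + t • ξ ≠ 0} with hUdef
  have hUopen : IsOpen U := by
    have hco : Continuous fun t : ℝ => p + t • ξ := by continuity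
    exact (isOpen_ne (x := (0 : EuclideanSpace ℝ (Fin n)))).preimage hco
  have hU0 : (0:ℝ) ∈ U := by simp [hUdef, hp]
  set F : ℝ → ℝ := fun t => ‖η‖ ^ 2 * ‖p + t • ξ‖ ^ 2 - 2 * ⟪p, η⟫ ^ 2 with hFdef
  have key : Set.EqOn G F U := by
    intro t ht
    have hq : p + t • ξ ≠ 0 := ht
    have hqn : (0:ℝ) < ‖p + t • ξ‖ := norm_pos_iff.mpr hq
    have hxy : x ≠ x + (‖p + t • ξ‖ ^ 2)⁻¹ • (p + t • ξ) := by
      intro h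
      have h0 : (‖p + t • ξ‖ ^ 2)⁻¹ • (p + t • ξ) = 0 := (left_eq_add.mp h)
      rcases smul_eq_zero.mp h0 with h1 | h1
      · exact (by positivity : ((‖p + t • ξ‖ ^ 2)⁻¹ : ℝ) ≠ 0) h1
      · exact hq h1
    have hfun : (fun x' => c x' (x + (‖p + t • ξ‖ ^ 2)⁻¹ • (p + t • ξ)))
        = fun x' => -(1/2 : ℝ) * Real.log (‖x' - (x + (‖p + t • ξ‖ ^ 2)⁻¹ • (p + t • ξ))‖ ^ 2) := by
      funext x'; exact hc x' _
    have hGt : G t = -(iteratedFDeriv ℝ 2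
        (fun x' => c x' (x + (‖p + t • ξ‖ ^ 2)⁻¹ • (p + t • ξ))) x ![η, η]) := rfl
    rw [hGt, hfun, aux_iterated _ x hxy η]
    have hsub : x - (x + (‖p + t • ξ‖ ^ 2)⁻¹ • (p + t • ξ))
        = -((‖p + t • ξ‖ ^ 2)⁻¹ • (p + t • ξ)) := by abel
    rw [hsub]
    have h1 : ⟪-((‖p + t • ξ‖ ^ 2)⁻¹ • (p + t • ξ)), η⟫
        = -((‖p + t • ξ‖ ^ 2)⁻¹ * ⟪p, η⟫) := by
      have hξη : ⟪ξ, η⟫ = 0 := by rw [real_inner_comm]; exact hperp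
      have hqη : ⟪p + t • ξ, η⟫ = ⟪p, η⟫ := by
        rw [inner_add_left, real_inner_smul_left, hξη]
        ring
      rw [inner_neg_left, real_inner_smul_left, hqη]
    have h2 : ‖-((‖p + t • ξ‖ ^ 2)⁻¹ • (p + t • ξ))‖ = ‖p + t • ξ‖⁻¹ := by
      rw [norm_neg, norm_smul, Real.norm_eq_abs, abs_of_pos (inv_pos.mpr (pow_pos hqn 2)), pow_two]
      field_simp
    rw [h1, h2]
    show -((2 * (-((‖p + t • ξ‖ ^ 2)⁻¹ * ⟪p, η⟫)) ^ 2 - ‖η‖ ^ 2 * (‖p + t • ξ‖⁻¹) ^ 2)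
        / (‖p + t • ξ‖⁻¹) ^ 4) = ‖η‖ ^ 2 * ‖p + t • ξ‖ ^ 2 - 2 * ⟪p, η⟫ ^ 2
    field_simp
    ring
  have hder1 : Set.EqOn (deriv G) (deriv F) U := by
    intro s hs
    exact Filter.EventuallyEq.deriv_eq
      (Filter.eventuallyEq_of_mem (hUopen.mem_nhds hs) key)
  have hder2 : deriv (deriv G) 0 = deriv (deriv F) 0 :=
    Filter.EventuallyEq.deriv_eq
      (Filter.eventuallyEq_of_mem (hUopen.mem_nhds hU0) hder1)
  rw [hder2]
  have hFpoly : F = fun t => (‖η‖ ^ 2 * ‖ξ‖ ^ 2) * t ^ 2 + (2 * ‖η‖ ^ 2 * ⟪p, ξ⟫) * t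
      + (‖η‖ ^ 2 * ‖p‖ ^ 2 - 2 * ⟪p, η⟫ ^ 2) := by
    funext t
    have hnorm : ‖p + t • ξ‖ ^ 2 = ‖p‖ ^ 2 + 2 * (t * ⟪p, ξ⟫) + t ^ 2 * ‖ξ‖ ^ 2 := by
      rw [norm_add_sq_real, real_inner_smul_right, norm_smul, Real.norm_eq_abs,
        mul_pow, sq_abs]
    show ‖η‖ ^ 2 * ‖p + t • ξ‖ ^ 2 - 2 * ⟪p, η⟫ ^ 2 = _
    rw [hnorm]
    ring
  rw [hFpoly]
  have hd1 : ∀ t : ℝ, HasDerivAt (fun t : ℝ => (‖η‖ ^ 2 * ‖ξ‖ ^ 2) * t ^ 2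
      + (2 * ‖η‖ ^ 2 * ⟪p, ξ⟫) * t + (‖η‖ ^ 2 * ‖p‖ ^ 2 - 2 * ⟪p, η⟫ ^ 2))
      (2 * (‖η‖ ^ 2 * ‖ξ‖ ^ 2) * t + 2 * ‖η‖ ^ 2 * ⟪p, ξ⟫) t := by
    intro t
    have := (((hasDerivAt_pow 2 t).const_mul (‖η‖ ^ 2 * ‖ξ‖ ^ 2)).add
      ((hasDerivAt_id t).const_mul (2 * ‖η‖ ^ 2 * ⟪p, ξ⟫))).add_const
      (‖η‖ ^ 2 * ‖p‖ ^ 2 - 2 * ⟪p, η⟫ ^ 2)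
    convert this using 1
    all_goals first | rfl | ring
  have hdF : deriv (fun t : ℝ => (‖η‖ ^ 2 * ‖ξ‖ ^ 2) * t ^ 2
      + (2 * ‖η‖ ^ 2 * ⟪p, ξ⟫) * t + (‖η‖ ^ 2 * ‖p‖ ^ 2 - 2 * ⟪p, η⟫ ^ 2))
      = fun t => 2 * (‖η‖ ^ 2 * ‖ξ‖ ^ 2) * t + 2 * ‖η‖ ^ 2 * ⟪p, ξ⟫ := by
    funext t; exact (hd1 t).deriv
  rw [hdF]
  have hd2 : HasDerivAt (fun t : ℝ => 2 * (‖η‖ ^ 2 * ‖ξ‖ ^ 2) * t + 2 * ‖η‖ ^ 2 * ⟪p, ξ⟫)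
      (2 * (‖η‖ ^ 2 * ‖ξ‖ ^ 2)) 0 := by
    simpa using ((hasDerivAt_id (0:ℝ)).const_mul (2 * (‖η‖ ^ 2 * ‖ξ‖ ^ 2))).add_const
      (2 * ‖η‖ ^ 2 * ⟪p, ξ⟫)
  rw [hd2.deriv]
  have := mul_pos (pow_pos hηp 2) (pow_pos hξp 2)
  linarith
end
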